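/- arXiv:1205.2020 — 5 statements merged into one kernel-verified Lean document; each statement's English description precedes it below -/
import Mathlib

section
/- Let A be a 2×2 integer matrix with entries (2 1; 1 1), with eigenvalues λ₁ = (3+√5)/2 > λ₂. Then for P = (x,y) ∈ 𝔾_m^2(ℚ̄), ĥ_A⁺(P) = (1/√5) · Σ_{v ∈ M_K} max{0, ((√5+1)/2)·log‖x‖_v + log‖y‖_v}. -/
open Filter NumberField IsDedekindDomain
open scoped Classical

noncomputable section

/-- The logarithm of the normalized absolute value of `a` at the finite place `v` of the
number field `K`:  `log ‖a‖_v = -(additive valuation of a) * log (norm of v)`. -/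
def finVal (K : Type*) [Field K] [NumberField K]
    (v : HeightOneSpectrum (𝓞 K)) (a : K) : ℝ :=
  if h : a = 0 then 0
  else (Multiplicative.toAdd (WithZero.unzero ((v.valuation K).ne_zero_iff.mpr h)) : ℤ) *
    Real.log (Ideal.absNorm v.asIdeal)

/-- The absolute logarithmic Weil height of a tuple of elements of a number field `K`:
`h(P) = Σ_{v ∈ M_K} max {0, log ‖x₁‖_v, …, log ‖x_N‖_v}` with suitably normalized
absolute values. -/
def logHeight (K : Type*) [Field K] [NumberField K] {N : ℕ} (x : Fin N → K) : ℝ :=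
  (Module.finrank ℚ K : ℝ)⁻¹ *
    ((∑ w : InfinitePlace K, (w.mult : ℝ) * ⨆ i, max 0 (Real.log (w (x i)))) +
     ∑ᶠ v : HeightOneSpectrum (𝓞 K), ⨆ i, max 0 (finVal K v (x i)))

/-- The height of a point of `𝔾_m^N(K)`. -/
def uHeight (K : Type*) [Field K] [NumberField K] {N : ℕ} (x : Fin N → Kˣ) : ℝ :=
  logHeight K (fun i => (x i : K))

/-- The monomial map associated to an integer matrix `A`:
`φ_A(x₁,…,x_N) = (∏ x_j^{a_{1j}}, …, ∏ x_j^{a_{Nj}})`. -/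
def phi {G : Type*} [CommGroup G] {N : ℕ} (A : Matrix (Fin N) (Fin N) ℤ)
    (x : Fin N → G) : Fin N → G :=
  fun i => ∏ j, (x j) ^ (A i j)

namespace Stmt2Aux

/-! ### Golden ratio analysis -/

lemma lam_eq : ((3 + Real.sqrt 5) / 2 : ℝ) = Real.goldenRatio ^ 2 := by
  rw [Real.goldenRatio_sq]; rw [Real.goldenRatio]; ring

lemma sqrt5_pos : (0 : ℝ) < Real.sqrt 5 := Real.sqrt_pos.mpr (by norm_num)

lemma fib_tendsto :
    Tendsto (fun n : ℕ => (Nat.fib n : ℝ) / Real.goldenRatio ^ n) atTop (nhds (Real.sqrt 5)⁻¹) := by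
  have h5 := sqrt5_pos
  have hratio : |Real.goldenConj / Real.goldenRatio| < 1 := by
    rw [abs_div, abs_of_pos Real.goldenRatio_pos, div_lt_one Real.goldenRatio_pos]
    have h1 : |Real.goldenConj| < 1 := abs_lt.mpr ⟨Real.neg_one_lt_goldenConj, by linarith [Real.goldenConj_neg]⟩
    linarith [Real.one_lt_goldenRatio]
  have key : ∀ n : ℕ, (Nat.fib n : ℝ) / Real.goldenRatio ^ n
      = (Real.sqrt 5)⁻¹ * (1 - (Real.goldenConj / Real.goldenRatio) ^ n) := by
    intro n
    rw [Real.coe_fib_eq]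
    have hg : Real.goldenRatio ^ n ≠ 0 := pow_ne_zero _ Real.goldenRatio_ne_zero
    generalize Real.goldenRatio = g at hg ⊢
    generalize Real.goldenConj = c
    rw [div_pow]
    field_simp
  simp only [key]
  have h0 := tendsto_pow_atTop_nhds_zero_of_abs_lt_one hratio
  have := ((tendsto_const_nhds (x := (1 : ℝ)) (f := atTop)).sub h0).const_mul (Real.sqrt 5)⁻¹
  simpa using this

lemma two_mul_tendsto : Tendsto (fun n : ℕ => 2 * n) atTop atTop :=
  tendsto_atTop_atTop.mpr (fun b => ⟨b, fun a ha => by omega⟩)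

lemma tendsto_b :
    Tendsto (fun n : ℕ => (Nat.fib (2 * n) : ℝ) / Real.goldenRatio ^ (2 * n)) atTop
      (nhds (Real.sqrt 5)⁻¹) := by
  have := fib_tendsto.comp two_mul_tendsto
  simpa [Function.comp_def] using this

lemma tendsto_a :
    Tendsto (fun n : ℕ => (Nat.fib (2 * n + 1) : ℝ) / Real.goldenRatio ^ (2 * n)) atTop
      (nhds (Real.goldenRatio * (Real.sqrt 5)⁻¹)) := by
  have hcomp : Tendsto (fun n : ℕ => 2 * n + 1) atTop atTop :=
    tendsto_atTop_atTop.mpr (fun b => ⟨b, fun a ha => by omega⟩)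
  have h := fib_tendsto.comp hcomp
  have h2 := h.const_mul Real.goldenRatio
  refine h2.congr fun n => ?_
  simp only [Function.comp_apply, pow_succ]
  field_simp

lemma maxval (s Lx Ly : ℝ) (hs : s * s = 5) (hpos : 0 < s) :
    max 0 (max ((((s + 1) / 2) * s⁻¹) * Lx + s⁻¹ * Ly)
      (s⁻¹ * Lx + ((((s + 1) / 2) * s⁻¹) - s⁻¹) * Ly))
    = s⁻¹ * max 0 (((s + 1) / 2) * Lx + Ly) := by
  have hne : s ≠ 0 := ne_of_gt hpos
  set a : ℝ := ((s + 1) / 2) * Lx + Ly with ha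
  have e1 : (((s + 1) / 2) * s⁻¹) * Lx + s⁻¹ * Ly = s⁻¹ * a := by rw [ha]; ring
  have e2 : s⁻¹ * Lx + ((((s + 1) / 2) * s⁻¹) - s⁻¹) * Ly = ((s - 1) / 2) * (s⁻¹ * a) := by
    rw [ha]; field_simp; ring_nf; linear_combination (-Lx) * hs
  rw [e1, e2]
  have h2 : (1 : ℝ) < s := by nlinarith
  have hc0 : 0 < (s - 1) / 2 := by linarith
  have hc1 : (s - 1) / 2 < 1 := by nlinarith
  rcases le_total a 0 with h | h
  · have t1 : s⁻¹ * a ≤ 0 := mul_nonpos_of_nonneg_of_nonpos (inv_nonneg.mpr hpos.le) h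
    have t2 : ((s - 1) / 2) * (s⁻¹ * a) ≤ 0 := mul_nonpos_of_nonneg_of_nonpos hc0.le t1
    rw [max_eq_left h, max_eq_left (max_le t1 t2), mul_zero]
  · have t1 : 0 ≤ s⁻¹ * a := mul_nonneg (inv_nonneg.mpr hpos.le) h
    have t2 : ((s - 1) / 2) * (s⁻¹ * a) ≤ s⁻¹ * a := by nlinarith
    rw [max_eq_right h, max_eq_left t2, max_eq_right t1]

/-- The elementary "local term" appearing in the height of the `n`-th iterate. -/
def pl (Lx Ly : ℝ) (n : ℕ) : ℝ :=
  max 0 (max ((Nat.fib (2 * n + 1) : ℝ) * Lx + (Nat.fib (2 * n) : ℝ) * Ly)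
    ((Nat.fib (2 * n) : ℝ) * Lx + ((Nat.fib (2 * n + 1) : ℝ) - (Nat.fib (2 * n) : ℝ)) * Ly))

/-- The key per-place limit. -/
lemma keylim (Lx Ly : ℝ) :
    Tendsto (fun n : ℕ => pl Lx Ly n / ((3 + Real.sqrt 5) / 2) ^ n) atTop
      (nhds ((Real.sqrt 5)⁻¹ * max 0 (((Real.sqrt 5 + 1) / 2) * Lx + Ly))) := by
  have hc : ∀ n : ℕ, (0 : ℝ) < Real.goldenRatio ^ (2 * n) := fun n => pow_pos Real.goldenRatio_pos _
  have heq : ∀ n : ℕ, pl Lx Ly n / ((3 + Real.sqrt 5) / 2) ^ n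
      = max 0 (max
          (((Nat.fib (2 * n + 1) : ℝ) / Real.goldenRatio ^ (2 * n)) * Lx
            + ((Nat.fib (2 * n) : ℝ) / Real.goldenRatio ^ (2 * n)) * Ly)
          (((Nat.fib (2 * n) : ℝ) / Real.goldenRatio ^ (2 * n)) * Lx
            + (((Nat.fib (2 * n + 1) : ℝ) / Real.goldenRatio ^ (2 * n))
              - ((Nat.fib (2 * n) : ℝ) / Real.goldenRatio ^ (2 * n))) * Ly)) := by
    intro n
    rw [pl, lam_eq, ← pow_mul]
    rw [← max_div_div_right (hc n).le, ← max_div_div_right (hc n).le, zero_div]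
    congr 2 <;> ring
  rw [tendsto_congr heq]
  have ha := tendsto_a
  have hb := tendsto_b
  have T1 := (ha.mul_const Lx).add (hb.mul_const Ly)
  have T2 := (hb.mul_const Lx).add ((ha.sub hb).mul_const Ly)
  have T := (tendsto_const_nhds (x := (0 : ℝ)) (f := atTop)).max (T1.max T2)
  have hval : max 0 (max ((Real.goldenRatio * (Real.sqrt 5)⁻¹) * Lx + (Real.sqrt 5)⁻¹ * Ly)
        ((Real.sqrt 5)⁻¹ * Lx + ((Real.goldenRatio * (Real.sqrt 5)⁻¹) - (Real.sqrt 5)⁻¹) * Ly))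
      = (Real.sqrt 5)⁻¹ * max 0 (((Real.sqrt 5 + 1) / 2) * Lx + Ly) := by
    have hg : Real.goldenRatio = (Real.sqrt 5 + 1) / 2 := by rw [Real.goldenRatio]; ring
    rw [hg]
    exact maxval (Real.sqrt 5) Lx Ly (Real.mul_self_sqrt (by norm_num)) sqrt5_pos
  rw [← hval]
  exact T

/-! ### The iterates of the monomial map -/

lemma mul_mul_zpow {G : Type*} [CommGroup G] (x y : G) (a b c d : ℤ) :
    (x ^ a * y ^ b) * (x ^ c * y ^ d) = x ^ (a + c) * y ^ (b + d) := by
  rw [mul_mul_mul_comm, ← zpow_add, ← zpow_add]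

lemma sq_zpow {G : Type*} [CommGroup G] (x y : G) (a b : ℤ) :
    (x ^ a * y ^ b) ^ (2 : ℤ) = x ^ (2 * a) * y ^ (2 * b) := by
  rw [mul_zpow, ← zpow_mul, ← zpow_mul, mul_comm a 2, mul_comm b 2]

lemma phi_apply {G : Type*} [CommGroup G] (u v : G) :
    phi !![2, 1; 1, 1] ![u, v] = ![u ^ (2 : ℤ) * v, u * v] := by
  funext i
  fin_cases i <;>
    simp [phi, Fin.prod_univ_two, Matrix.cons_val_zero, Matrix.cons_val_one, Matrix.head_cons]

lemma iterate_phi {G : Type*} [CommGroup G] (x y : G) (n : ℕ) :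
    (phi (!![2, 1; 1, 1] : Matrix (Fin 2) (Fin 2) ℤ))^[n] ![x, y]
      = ![x ^ ((Nat.fib (2 * n + 1) : ℤ)) * y ^ ((Nat.fib (2 * n) : ℤ)),
          x ^ ((Nat.fib (2 * n) : ℤ)) * y ^ ((Nat.fib (2 * n + 1) : ℤ) - (Nat.fib (2 * n) : ℤ))] := by
  induction n with
  | zero =>
    simp only [Function.iterate_zero, id_eq]
    funext i
    fin_cases i <;> norm_num
  | succ n ih =>
    rw [Function.iterate_succ_apply', ih, phi_apply]
    have e1 : ((Nat.fib (2 * (n + 1) + 1) : ℤ))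
        = 2 * (Nat.fib (2 * n + 1) : ℤ) + (Nat.fib (2 * n) : ℤ) := by
      have h1 := Nat.fib_add_two (n := 2 * n)
      have h2 := Nat.fib_add_two (n := 2 * n + 1)
      have : Nat.fib (2 * (n + 1) + 1) = 2 * Nat.fib (2 * n + 1) + Nat.fib (2 * n) := by
        have h3 : 2 * (n + 1) + 1 = (2 * n + 1) + 2 := by ring
        rw [h3, h2, h1]; ring
      exact_mod_cast this
    have e2 : ((Nat.fib (2 * (n + 1)) : ℤ))
        = (Nat.fib (2 * n + 1) : ℤ) + (Nat.fib (2 * n) : ℤ) := by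
      have h1 := Nat.fib_add_two (n := 2 * n)
      have : Nat.fib (2 * (n + 1)) = Nat.fib (2 * n + 1) + Nat.fib (2 * n) := by
        have h3 : 2 * (n + 1) = 2 * n + 2 := by ring
        rw [h3, h1]; ring
      exact_mod_cast this
    have e3 : ((Nat.fib (2 * (n + 1) + 1) : ℤ)) - ((Nat.fib (2 * (n + 1)) : ℤ))
        = (Nat.fib (2 * n + 1) : ℤ) := by rw [e1, e2]; ring
    funext i
    fin_cases i <;>
      simp only [Fin.zero_eta, Fin.mk_one, Fin.isValue, Matrix.cons_val_zero,
        Matrix.cons_val_one, Matrix.head_cons, e1, e2, e3]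
    · rw [sq_zpow, mul_mul_zpow,
        show 2 * (Nat.fib (2 * n) : ℤ) + ((Nat.fib (2 * n + 1) : ℤ) - (Nat.fib (2 * n) : ℤ))
          = (Nat.fib (2 * n + 1) : ℤ) + (Nat.fib (2 * n) : ℤ) from by ring]
    · rw [mul_mul_zpow,
        show (Nat.fib (2 * n) : ℤ) + ((Nat.fib (2 * n + 1) : ℤ) - (Nat.fib (2 * n) : ℤ))
          = (Nat.fib (2 * n + 1) : ℤ) from by ring,
        show 2 * (Nat.fib (2 * n + 1) : ℤ) + (Nat.fib (2 * n) : ℤ)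
            - ((Nat.fib (2 * n + 1) : ℤ) + (Nat.fib (2 * n) : ℤ))
          = (Nat.fib (2 * n + 1) : ℤ) from by ring]

/-! ### Local computations of the height -/

variable {K : Type*} [Field K] [NumberField K]

lemma max_zero_max (A B : ℝ) : max (max 0 A) (max 0 B) = max 0 (max A B) := by
  rw [max_max_max_comm, max_self]

lemma csup2 (g : Fin 2 → ℝ) : (⨆ i, g i) = max (g 0) (g 1) := by
  apply le_antisymm
  · exact ciSup_le (fun i => by fin_cases i <;> [exact le_max_left _ _; exact le_max_right _ _])
  · exact max_le (le_ciSup (Set.Finite.bddAbove (Set.finite_range g)) 0)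
      (le_ciSup (Set.Finite.bddAbove (Set.finite_range g)) 1)

lemma finVal_mul (v : HeightOneSpectrum (𝓞 K)) {a b : K} (ha : a ≠ 0) (hb : b ≠ 0) :
    finVal K v (a * b) = finVal K v a + finVal K v b := by
  have hab : a * b ≠ 0 := mul_ne_zero ha hb
  rw [finVal, finVal, finVal, dif_neg hab, dif_neg ha, dif_neg hb]
  have h1 : WithZero.unzero ((v.valuation K).ne_zero_iff.mpr hab)
      = WithZero.unzero ((v.valuation K).ne_zero_iff.mpr ha)
        * WithZero.unzero ((v.valuation K).ne_zero_iff.mpr hb) := by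
    rw [← WithZero.coe_inj, WithZero.coe_mul, WithZero.coe_unzero, WithZero.coe_unzero,
      WithZero.coe_unzero]
    exact map_mul _ _ _
  rw [h1, toAdd_mul]
  push_cast
  ring

lemma finVal_zpow (v : HeightOneSpectrum (𝓞 K)) {a : K} (ha : a ≠ 0) (p : ℤ) :
    finVal K v (a ^ p) = p * finVal K v a := by
  have hap : a ^ p ≠ 0 := zpow_ne_zero _ ha
  rw [finVal, finVal, dif_neg hap, dif_neg ha]
  have h1 : WithZero.unzero ((v.valuation K).ne_zero_iff.mpr hap)
      = WithZero.unzero ((v.valuation K).ne_zero_iff.mpr ha) ^ p := by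
    rw [← WithZero.coe_inj, WithZero.coe_zpow, WithZero.coe_unzero, WithZero.coe_unzero]
    exact map_zpow₀ _ _ _
  rw [h1, toAdd_zpow, smul_eq_mul]
  push_cast
  ring

lemma finVal_units (v : HeightOneSpectrum (𝓞 K)) (x y : Kˣ) (p q : ℤ) :
    finVal K v ((x : K) ^ p * (y : K) ^ q) = p * finVal K v x + q * finVal K v y := by
  rw [finVal_mul v (zpow_ne_zero _ x.ne_zero) (zpow_ne_zero _ y.ne_zero),
    finVal_zpow v x.ne_zero, finVal_zpow v y.ne_zero]

lemma log_w (w : InfinitePlace K) (x y : Kˣ) (p q : ℤ) :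
    Real.log (w ((x : K) ^ p * (y : K) ^ q))
      = p * Real.log (w (x : K)) + q * Real.log (w (y : K)) := by
  rw [map_mul, map_zpow₀, map_zpow₀, Real.log_mul (zpow_ne_zero _ ((map_ne_zero w).mpr x.ne_zero))
    (zpow_ne_zero _ ((map_ne_zero w).mpr y.ne_zero)), Real.log_zpow, Real.log_zpow]

lemma finVal_eq_zero_of_val_one (v : HeightOneSpectrum (𝓞 K)) {a : K}
    (h : v.valuation K a = 1) : finVal K v a = 0 := by
  rcases eq_or_ne a 0 with rfl | ha
  · simp [finVal]
  · rw [finVal, dif_neg ha]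
    have h1 : WithZero.unzero ((v.valuation K).ne_zero_iff.mpr ha) = 1 := by
      rw [← WithZero.coe_inj, WithZero.coe_unzero, h, WithZero.coe_one]
    rw [h1]
    simp

lemma finVal_support_finite (a : K) (ha : a ≠ 0) :
    {v : HeightOneSpectrum (𝓞 K) | finVal K v a ≠ 0}.Finite := by
  obtain ⟨⟨n, d⟩, hk⟩ := IsLocalization.surj (nonZeroDivisors (𝓞 K)) a
  have hd0 : (d : 𝓞 K) ≠ 0 := nonZeroDivisors.ne_zero d.2
  have hdK : (algebraMap (𝓞 K) K) (d : 𝓞 K) ≠ 0 := by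
    simpa using (map_ne_zero_iff _ (IsFractionRing.injective (𝓞 K) K)).mpr hd0
  have hn0 : (n : 𝓞 K) ≠ 0 := by
    intro h0
    rw [h0, map_zero] at hk
    exact (mul_ne_zero ha hdK) hk
  have hfin := (Ideal.finite_factors (I := Ideal.span {(n : 𝓞 K)})
      (by simpa [Ne, Ideal.span_singleton_eq_bot] using hn0)).union
    (Ideal.finite_factors (I := Ideal.span {(d : 𝓞 K)})
      (by simpa [Ne, Ideal.span_singleton_eq_bot] using hd0))
  apply Set.Finite.subset hfin
  intro v hv
  simp only [Set.mem_setOf_eq, Set.mem_union]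
  by_contra hcon
  push_neg at hcon
  obtain ⟨h1, h2⟩ := hcon
  apply hv
  apply finVal_eq_zero_of_val_one
  have hvn : v.intValuationDef (n : 𝓞 K) = 1 :=
    le_antisymm (v.intValuation_le_one _)
      (not_lt.mp (fun hlt => h1 ((v.intValuation_lt_one_iff_dvd _).mp hlt)))
  have hvd : v.intValuationDef (d : 𝓞 K) = 1 :=
    le_antisymm (v.intValuation_le_one _)
      (not_lt.mp (fun hlt => h2 ((v.intValuation_lt_one_iff_dvd _).mp hlt)))
  have hval := congrArg (v.valuation K) hk
  rw [map_mul, HeightOneSpectrum.valuation_of_algebraMap, HeightOneSpectrum.valuation_of_algebraMap,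
    HeightOneSpectrum.intValuation_apply, HeightOneSpectrum.intValuation_apply, hvn, hvd,
    mul_one] at hval
  exact hval

lemma uHeight_units (x y : Kˣ) (p q r s : ℤ) :
    uHeight K ![x ^ p * y ^ q, x ^ r * y ^ s]
      = (Module.finrank ℚ K : ℝ)⁻¹ *
        ((∑ w : InfinitePlace K, (w.mult : ℝ) *
            max 0 (max ((p : ℝ) * Real.log (w (x : K)) + (q : ℝ) * Real.log (w (y : K)))
              ((r : ℝ) * Real.log (w (x : K)) + (s : ℝ) * Real.log (w (y : K))))) +
         ∑ᶠ v : HeightOneSpectrum (𝓞 K),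
            max 0 (max ((p : ℝ) * finVal K v x + (q : ℝ) * finVal K v y)
              ((r : ℝ) * finVal K v x + (s : ℝ) * finVal K v y))) := by
  unfold uHeight logHeight
  congr 1
  congr 1
  · refine Finset.sum_congr rfl fun w _ => ?_
    congr 1
    rw [csup2]
    simp only [Matrix.cons_val_zero, Matrix.cons_val_one, Matrix.head_cons, Units.val_mul,
      Units.val_zpow_eq_zpow_val]
    rw [log_w, log_w, max_zero_max]
  · refine finsum_congr fun v => ?_
    rw [csup2]
    simp only [Matrix.cons_val_zero, Matrix.cons_val_one, Matrix.head_cons, Units.val_mul,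
      Units.val_zpow_eq_zpow_val]
    rw [finVal_units, finVal_units, max_zero_max]

lemma uHeight_iter (x y : Kˣ) (n : ℕ) :
    uHeight K ((phi (!![2, 1; 1, 1] : Matrix (Fin 2) (Fin 2) ℤ))^[n] ![x, y])
      = (Module.finrank ℚ K : ℝ)⁻¹ *
        ((∑ w : InfinitePlace K,
            (w.mult : ℝ) * pl (Real.log (w (x : K))) (Real.log (w (y : K))) n) +
         ∑ᶠ v : HeightOneSpectrum (𝓞 K), pl (finVal K v x) (finVal K v y) n) := by
  rw [iterate_phi, uHeight_units]
  congr 1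
  congr 1
  · refine Finset.sum_congr rfl fun w _ => ?_
    congr 1
    simp only [pl]
    push_cast
    ring_nf
  · refine finsum_congr fun v => ?_
    simp only [pl]
    push_cast
    ring_nf

end Stmt2Aux

/-- For A = (2 1; 1 1) with λ₁ = (3+√5)/2, the canonical height of P = (x,y) is
(1/√5) · Σ_{v ∈ M_K} max{0, ((√5+1)/2)·log‖x‖_v + log‖y‖_v}. -/
theorem statement2 (K : Type*) [Field K] [NumberField K] (x y : Kˣ) :
    Filter.limsup
      (fun n : ℕ =>
        uHeight K ((phi (!![2, 1; 1, 1] : Matrix (Fin 2) (Fin 2) ℤ))^[n] ![x, y]) /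
          ((3 + Real.sqrt 5) / 2) ^ n)
      Filter.atTop
    = (Real.sqrt 5)⁻¹ * ((Module.finrank ℚ K : ℝ)⁻¹ *
        ((∑ w : InfinitePlace K, (w.mult : ℝ) *
            max 0 (((Real.sqrt 5 + 1) / 2) * Real.log (w (x : K)) + Real.log (w (y : K)))) +
         ∑ᶠ v : HeightOneSpectrum (𝓞 K),
            max 0 (((Real.sqrt 5 + 1) / 2) * finVal K v (x : K) + finVal K v (y : K)))) := by
  have hfx := Stmt2Aux.finVal_support_finite (x : K) x.ne_zero
  have hfy := Stmt2Aux.finVal_support_finite (y : K) y.ne_zero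
  set T : Finset (HeightOneSpectrum (𝓞 K)) := (hfx.union hfy).toFinset with hTdef
  have hmemT : ∀ v : HeightOneSpectrum (𝓞 K), v ∉ T →
      finVal K v (x : K) = 0 ∧ finVal K v (y : K) = 0 := by
    intro v hv
    rw [hTdef, Set.Finite.mem_toFinset, Set.mem_union] at hv
    push_neg at hv
    obtain ⟨h1, h2⟩ := hv
    simp only [Set.mem_setOf_eq, not_not] at h1 h2
    exact ⟨h1, h2⟩
  have hfun : ∀ n : ℕ,
      uHeight K ((phi (!![2, 1; 1, 1] : Matrix (Fin 2) (Fin 2) ℤ))^[n] ![x, y]) /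
          ((3 + Real.sqrt 5) / 2) ^ n
      = (Module.finrank ℚ K : ℝ)⁻¹ *
          ((∑ w : InfinitePlace K, (w.mult : ℝ) *
              (Stmt2Aux.pl (Real.log (w (x : K))) (Real.log (w (y : K))) n /
                ((3 + Real.sqrt 5) / 2) ^ n)) +
           ∑ v ∈ T, Stmt2Aux.pl (finVal K v (x : K)) (finVal K v (y : K)) n /
              ((3 + Real.sqrt 5) / 2) ^ n) := by
    intro n
    rw [Stmt2Aux.uHeight_iter]
    rw [finsum_eq_finset_sum_of_support_subset _ (s := T) ?_]
    · rw [mul_div_assoc, add_div, Finset.sum_div, Finset.sum_div]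
      simp only [mul_div_assoc]
    · intro v hv
      simp only [Function.mem_support] at hv
      by_contra hvT
      obtain ⟨h1, h2⟩ := hmemT v hvT
      apply hv
      simp [Stmt2Aux.pl, h1, h2]
  have H1 : Tendsto (fun n : ℕ => ∑ w : InfinitePlace K, (w.mult : ℝ) *
        (Stmt2Aux.pl (Real.log (w (x : K))) (Real.log (w (y : K))) n /
          ((3 + Real.sqrt 5) / 2) ^ n)) atTop
      (nhds (∑ w : InfinitePlace K, (w.mult : ℝ) *
        ((Real.sqrt 5)⁻¹ *
          max 0 (((Real.sqrt 5 + 1) / 2) * Real.log (w (x : K)) + Real.log (w (y : K)))))) :=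
    tendsto_finset_sum _ (fun w _ => (Stmt2Aux.keylim _ _).const_mul _)
  have H2 : Tendsto (fun n : ℕ => ∑ v ∈ T,
        Stmt2Aux.pl (finVal K v (x : K)) (finVal K v (y : K)) n /
          ((3 + Real.sqrt 5) / 2) ^ n) atTop
      (nhds (∑ v ∈ T, (Real.sqrt 5)⁻¹ *
        max 0 (((Real.sqrt 5 + 1) / 2) * finVal K v (x : K) + finVal K v (y : K)))) :=
    tendsto_finset_sum _ (fun v _ => Stmt2Aux.keylim _ _)
  have Hmain := (H1.add H2).const_mul (Module.finrank ℚ K : ℝ)⁻¹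
  have hT2 := Hmain.congr (fun n => (hfun n).symm)
  rw [hT2.limsup_eq]
  rw [finsum_eq_finset_sum_of_support_subset
      (fun v : HeightOneSpectrum (𝓞 K) =>
        max 0 (((Real.sqrt 5 + 1) / 2) * finVal K v (x : K) + finVal K v (y : K))) (s := T) ?_]
  · have hL : ∑ w : InfinitePlace K, (w.mult : ℝ) *
        ((Real.sqrt 5)⁻¹ *
          max 0 (((Real.sqrt 5 + 1) / 2) * Real.log (w (x : K)) + Real.log (w (y : K))))
        = (Real.sqrt 5)⁻¹ * ∑ w : InfinitePlace K, (w.mult : ℝ) *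
          max 0 (((Real.sqrt 5 + 1) / 2) * Real.log (w (x : K)) + Real.log (w (y : K))) := by
      rw [Finset.mul_sum]
      exact Finset.sum_congr rfl fun w _ => by ring
    have hR : ∑ v ∈ T, (Real.sqrt 5)⁻¹ *
        max 0 (((Real.sqrt 5 + 1) / 2) * finVal K v (x : K) + finVal K v (y : K))
        = (Real.sqrt 5)⁻¹ * ∑ v ∈ T,
          max 0 (((Real.sqrt 5 + 1) / 2) * finVal K v (x : K) + finVal K v (y : K)) :=
      (Finset.mul_sum _ _ _).symm
    rw [hL, hR]
    ring
  · intro v hv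
    simp only [Function.mem_support] at hv
    by_contra hvT
    obtain ⟨h1, h2⟩ := hmemT v hvT
    apply hv
    simp [h1, h2]
end
end

section
/- Let A be a 2×2 integer matrix with entries (2 1; 1 1). For every ε > 0 there exists a point P ∈ 𝔾_m^2(ℚ) with 0 < ĥ_A⁺(P) < ε. In particular the set of points of 𝔾_m^2(ℚ) with canonical height less than ε is infinite. -/
open Filter NumberField IsDedekindDomain
open scoped Classical
open scoped Topology

noncomputable section

/-- The canonical height of P ∈ 𝔾_m²(ℚ) with respect to the monomial map of
A = (2 1; 1 1), i.e. limsup h(φ_A^n(P))/λ₁ⁿ with λ₁ = (3+√5)/2. -/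
def hatHeightA (P : Fin 2 → ℚˣ) : ℝ :=
  Filter.limsup
    (fun n : ℕ =>
      uHeight ℚ ((phi (!![2, 1; 1, 1] : Matrix (Fin 2) (Fin 2) ℤ))^[n] P) /
        ((3 + Real.sqrt 5) / 2) ^ n)
    Filter.atTop


open scoped Multiplicative

/-! ### Auxiliary material -/

section Aux

lemma zpow_finsum' {G : Type*} [CommGroup G] {ι : Type*} (u : G) (s : Finset ι) (f : ι → ℤ) :
    u ^ (∑ j ∈ s, f j) = ∏ j ∈ s, u ^ f j := by
  induction s using Finset.cons_induction with
  | empty => simp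
  | cons a s ha ih => rw [Finset.sum_cons, Finset.prod_cons, zpow_add, ih]

lemma phi_zpow {G : Type*} [CommGroup G] {N : ℕ} (A : Matrix (Fin N) (Fin N) ℤ)
    (u : G) (c : Fin N → ℤ) :
    phi A (fun j => u ^ (c j)) = fun i => u ^ ((A.mulVec c) i) := by
  funext i
  simp only [phi, Matrix.mulVec, dotProduct, zpow_finsum', ← zpow_mul, mul_comm]

lemma phi_iterate_zpow {G : Type*} [CommGroup G] {N : ℕ} (A : Matrix (Fin N) (Fin N) ℤ)
    (u : G) (c : Fin N → ℤ) (n : ℕ) :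
    (phi A)^[n] (fun j => u ^ (c j)) = fun i => u ^ (((A ^ n).mulVec c) i) := by
  induction n with
  | zero => simp [Matrix.mulVec_one]
  | succ n ih =>
      rw [Function.iterate_succ_apply', ih, phi_zpow, pow_succ']
      funext i
      rw [← Matrix.mulVec_mulVec]

def A2 : Matrix (Fin 2) (Fin 2) ℤ := !![2, 1; 1, 1]

def yv (k : ℕ) : Fin 2 → ℤ := ![(Nat.fib (2*k+2) : ℤ), -(Nat.fib (2*k+3) : ℤ)]

def dv (m : ℕ) : Fin 2 → ℤ :=
  ![-(Nat.fib (2*m) : ℤ), (Nat.fib (2*m) : ℤ) - (Nat.fib (2*m+1) : ℤ)]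

lemma fibZ (n : ℕ) : (Nat.fib (n+2) : ℤ) = Nat.fib n + Nat.fib (n+1) := by
  rw [Nat.fib_add_two]; push_cast; ring

lemma A2_mulVec (a b : ℤ) : A2.mulVec ![a, b] = ![2*a+b, a+b] := by
  funext i
  fin_cases i <;>
    simp [A2, Matrix.mulVec, dotProduct, Fin.sum_univ_two] <;> ring

lemma step_yv (k : ℕ) : A2.mulVec (yv (k+1)) = yv k := by
  show A2.mulVec ![(Nat.fib (2*k+4) : ℤ), -(Nat.fib (2*k+5) : ℤ)] = _
  rw [A2_mulVec]
  funext i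
  fin_cases i <;>
    simp [yv, show 2*k+4 = (2*k+2)+2 from rfl, show 2*k+5 = (2*k+3)+2 from rfl, fibZ] <;> ring

lemma step_dv (m : ℕ) : A2.mulVec (dv m) = dv (m+1) := by
  show A2.mulVec ![-(Nat.fib (2*m) : ℤ), (Nat.fib (2*m) : ℤ) - (Nat.fib (2*m+1) : ℤ)] = _
  rw [A2_mulVec]
  funext i
  fin_cases i <;>
    simp [dv, show 2*(m+1) = (2*m)+2 from rfl, show 2*(m+1)+1 = (2*m+1)+2 from rfl, fibZ] <;> ring

lemma pow_yv : ∀ j k : ℕ, (A2 ^ j).mulVec (yv (j + k)) = yv k := by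
  intro j
  induction j with
  | zero => intro k; simp [Matrix.mulVec_one]
  | succ j ih =>
      intro k
      rw [show (j+1) + k = (j+k)+1 by omega, pow_succ, ← Matrix.mulVec_mulVec, step_yv (j+k),
        ih k]

lemma pow_dv : ∀ m : ℕ, (A2 ^ m).mulVec (dv 0) = dv m := by
  intro m
  induction m with
  | zero => simp [Matrix.mulVec_one]
  | succ m ih => rw [pow_succ', ← Matrix.mulVec_mulVec, ih, step_dv]

lemma main_exp (k m : ℕ) : (A2 ^ (k+1+m)).mulVec (yv k) = dv m := by
  have h1 : k+1+m = m + (1 + k) := by omega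
  have h0 : (A2 ^ k).mulVec (yv k) = yv 0 := by simpa using pow_yv k 0
  rw [h1, pow_add, ← Matrix.mulVec_mulVec, pow_add, ← Matrix.mulVec_mulVec, pow_one, h0]
  have h2 : A2.mulVec (yv 0) = dv 0 := by
    show A2.mulVec ![(1:ℤ), -2] = _
    · rw [A2_mulVec]
      funext i; fin_cases i <;> simp [dv]
  rw [h2, pow_dv]

/-! ### The finite places of `ℚ` -/

lemma two_ne_zero_OQ : (2 : 𝓞 ℚ) ≠ 0 := two_ne_zero

lemma prime_two_OQ : Prime (2 : 𝓞 ℚ) := by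
  rw [← MulEquiv.prime_iff Rat.ringOfIntegersEquiv.toMulEquiv]
  have : Rat.ringOfIntegersEquiv.toMulEquiv (2 : 𝓞 ℚ) = (2 : ℤ) := by
    simpa using map_ofNat Rat.ringOfIntegersEquiv 2
  rw [this]
  exact Int.prime_two

def v2 : HeightOneSpectrum (𝓞 ℚ) where
  asIdeal := Ideal.span {(2 : 𝓞 ℚ)}
  isPrime := (Ideal.span_singleton_prime two_ne_zero_OQ).mpr prime_two_OQ
  ne_bot := by
    simp only [ne_eq, Ideal.span_singleton_eq_bot]
    exact two_ne_zero_OQ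

lemma absNorm_v2 : (Ideal.absNorm v2.asIdeal : ℝ) = 2 := by
  have h2 : (2 : 𝓞 ℚ) = algebraMap ℤ (𝓞 ℚ) 2 := by simp
  have : Ideal.absNorm v2.asIdeal = (Algebra.norm ℤ (2 : 𝓞 ℚ)).natAbs :=
    Ideal.absNorm_span_singleton _
  rw [this, h2, Algebra.norm_algebraMap_of_basis (Module.Free.chooseBasis ℤ (𝓞 ℚ))]
  rw [show Fintype.card (Module.Free.ChooseBasisIndex ℤ (𝓞 ℚ)) = 1 by
    rw [← Module.finrank_eq_card_chooseBasisIndex, NumberField.RingOfIntegers.rank,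
      Module.finrank_self]]
  norm_num

lemma algebraMap_OQ_two : algebraMap (𝓞 ℚ) ℚ (2 : 𝓞 ℚ) = (2 : ℚ) := map_ofNat _ 2

lemma val_v2_two : v2.valuation ℚ (2 : ℚ) =
    (↑(Multiplicative.ofAdd (-1 : ℤ)) : WithZero (Multiplicative ℤ)) := by
  rw [← algebraMap_OQ_two, v2.valuation_of_algebraMap]
  exact v2.intValuation_singleton two_ne_zero_OQ rfl

lemma val_other_two (v : HeightOneSpectrum (𝓞 ℚ)) (hv : v ≠ v2) :
    v.valuation ℚ (2 : ℚ) = 1 := by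
  rw [← algebraMap_OQ_two]
  rcases lt_or_eq_of_le (v.valuation_le_one (K := ℚ) (2 : 𝓞 ℚ)) with h | h
  · exfalso
    rw [v.valuation_lt_one_iff_dvd] at h
    have hle : v2.asIdeal ≤ v.asIdeal := Ideal.le_of_dvd h
    have := (v2.isMaximal.eq_of_le v.isPrime.ne_top hle).symm
    exact hv (HeightOneSpectrum.ext this)
  · exact h

lemma finVal_v2 (c : ℤ) : finVal ℚ v2 ((2:ℚ) ^ c) = (-c) * Real.log 2 := by
  have h : (2:ℚ) ^ c ≠ 0 := zpow_ne_zero _ two_ne_zero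
  rw [finVal, dif_neg h]
  have hval : v2.valuation ℚ ((2:ℚ) ^ c) = (↑(Multiplicative.ofAdd (-1 : ℤ) ^ c) : WithZero (Multiplicative ℤ)) := by
    rw [map_zpow₀, val_v2_two, ← WithZero.coe_zpow]
  have hunz : WithZero.unzero ((v2.valuation ℚ).ne_zero_iff.mpr h)
      = Multiplicative.ofAdd (-1 : ℤ) ^ c := by
    apply WithZero.coe_inj.mp
    rw [WithZero.coe_unzero, hval]
  rw [hunz, absNorm_v2, toAdd_zpow, toAdd_ofAdd, smul_eq_mul]
  push_cast
  ring

lemma finVal_other (v : HeightOneSpectrum (𝓞 ℚ)) (hv : v ≠ v2) (c : ℤ) :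
    finVal ℚ v ((2:ℚ) ^ c) = 0 := by
  have h : (2:ℚ) ^ c ≠ 0 := zpow_ne_zero _ two_ne_zero
  rw [finVal, dif_neg h]
  have hval : v.valuation ℚ ((2:ℚ) ^ c) = (↑(1 : Multiplicative ℤ) : WithZero (Multiplicative ℤ)) := by
    rw [map_zpow₀, val_other_two v hv, one_zpow]
    rfl
  have hunz : WithZero.unzero ((v.valuation ℚ).ne_zero_iff.mpr h) = (1 : Multiplicative ℤ) := by
    apply WithZero.coe_inj.mp
    rw [WithZero.coe_unzero, hval]
  rw [hunz]
  simp

lemma iSup_fin2 (g : Fin 2 → ℝ) : (⨆ i, g i) = max (g 0) (g 1) := by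
  apply le_antisymm
  · apply ciSup_le
    intro i
    fin_cases i
    · exact le_max_left _ _
    · exact le_max_right _ _
  · apply max_le <;> exact le_ciSup (Set.finite_range g).bddAbove _

lemma infinitePlace_term (w : InfinitePlace ℚ) (c : ℤ) (hc : c ≤ 0) :
    max 0 (Real.log (w ((2:ℚ) ^ c))) = 0 := by
  have h2 : w (2:ℚ) = 2 := by
    rw [← NumberField.InfinitePlace.mk_embedding w, NumberField.InfinitePlace.apply,
      map_ofNat]
    simp
  rw [map_zpow₀, h2, Real.log_zpow]
  apply max_eq_left
  apply mul_nonpos_of_nonpos_of_nonneg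
  · exact_mod_cast hc
  · exact Real.log_nonneg one_le_two

lemma logHeight_two_zpow (c : Fin 2 → ℤ) (hc : ∀ i, c i ≤ 0) :
    logHeight ℚ (fun i => (2:ℚ) ^ c i) = (max (-(c 0)) (-(c 1)) : ℤ) * Real.log 2 := by
  rw [logHeight]
  have h1 : (Module.finrank ℚ ℚ : ℝ)⁻¹ = 1 := by
    rw [Module.finrank_self]; norm_num
  rw [h1, one_mul]
  have hinf : (∑ w : InfinitePlace ℚ, (w.mult : ℝ) *
      ⨆ i, max 0 (Real.log (w ((fun i => (2:ℚ) ^ c i) i)))) = 0 := by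
    apply Finset.sum_eq_zero
    intro w _
    have : (⨆ i, max 0 (Real.log (w ((2:ℚ) ^ c i)))) = 0 := by
      have he : ∀ i : Fin 2, max 0 (Real.log (w ((2:ℚ) ^ c i))) = 0 :=
        fun i => infinitePlace_term w (c i) (hc i)
      simp only [he, ciSup_const]
    simp only [this, mul_zero]
  rw [hinf, zero_add]
  have hfin : (∑ᶠ v : HeightOneSpectrum (𝓞 ℚ),
      ⨆ i, max 0 (finVal ℚ v ((fun i => (2:ℚ) ^ c i) i)))
      = ⨆ i, max 0 (finVal ℚ v2 ((2:ℚ) ^ c i)) := by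
    apply finsum_eq_single
    intro v hv
    have he : ∀ i : Fin 2, max 0 (finVal ℚ v ((2:ℚ) ^ c i)) = 0 := by
      intro i
      rw [finVal_other v hv, max_self]
    simp only [he, ciSup_const]
  rw [hfin, iSup_fin2]
  have hv2 : ∀ i : Fin 2, max 0 (finVal ℚ v2 ((2:ℚ) ^ c i)) = (-(c i)) * Real.log 2 := by
    intro i
    rw [finVal_v2]
    apply max_eq_right
    apply mul_nonneg
    · simp only [Left.nonneg_neg_iff]
      exact_mod_cast hc i
    · exact Real.log_nonneg one_le_two
  rw [hv2 0, hv2 1, ← max_mul_of_nonneg _ _ (Real.log_nonneg one_le_two)]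
  push_cast
  ring_nf

/-! ### The points and their canonical heights -/

def u2 : ℚˣ := Units.mk0 2 two_ne_zero

def Pt (k : ℕ) : Fin 2 → ℚˣ := fun i => u2 ^ (yv k i)

lemma uHeight_u2_zpow (c : Fin 2 → ℤ) (hc : ∀ i, c i ≤ 0) :
    uHeight ℚ (fun i => u2 ^ c i) = (max (-(c 0)) (-(c 1)) : ℤ) * Real.log 2 := by
  rw [uHeight]
  have : (fun i => ((u2 ^ c i : ℚˣ) : ℚ)) = fun i => (2:ℚ) ^ c i := by
    funext i
    simp [u2]
  rw [this]
  exact logHeight_two_zpow c hc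


def lam : ℝ := (3 + Real.sqrt 5) / 2

lemma sqrt5_pos : 0 < Real.sqrt 5 := Real.sqrt_pos.mpr (by norm_num)

lemma sqrt5_sq : Real.sqrt 5 ^ 2 = 5 := Real.sq_sqrt (by norm_num)

lemma lam_pos : 0 < lam := by
  have := sqrt5_pos; rw [lam]; linarith

lemma one_lt_lam : 1 < lam := by
  have := sqrt5_pos; rw [lam]; linarith

lemma lam_eq : lam = Real.goldenRatio ^ 2 := by
  rw [lam, Real.goldenRatio, div_pow]
  have := sqrt5_sq
  nlinarith [sqrt5_sq]

lemma gc_sq_lt : Real.goldenConj ^ 2 < lam := by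
  rw [lam, Real.goldenConj, div_pow]
  nlinarith [sqrt5_sq, sqrt5_pos]

lemma key_tendsto (k : ℕ) :
    Tendsto (fun n : ℕ => Real.log 2 * (Nat.fib (2*(n - (k+1))) : ℝ) / lam ^ n) atTop
      (𝓝 (Real.log 2 / (Real.sqrt 5 * lam ^ (k+1)))) := by
  rw [← tendsto_add_atTop_iff_nat (k+2)]
  have heq : ∀ m : ℕ, Real.log 2 * (Nat.fib (2*((m + (k+2)) - (k+1))) : ℝ) / lam ^ (m+(k+2))
      = (Real.log 2 / (Real.sqrt 5 * lam ^ (k+1))) * (1 - (Real.goldenConj^2/lam) ^ (m+1)) := by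
    intro m
    rw [show (m + (k+2)) - (k+1) = m+1 by omega]
    rw [Real.coe_fib_eq]
    have hφ : Real.goldenRatio ^ (2*(m+1)) = lam ^ (m+1) := by rw [lam_eq, pow_mul]
    have hψ : Real.goldenConj ^ (2*(m+1)) = (Real.goldenConj ^ 2) ^ (m+1) := by rw [pow_mul]
    have hlam : lam ^ (m + (k+2)) = lam ^ (m+1) * lam ^ (k+1) := by
      rw [← pow_add]; ring_nf
    rw [hφ, hψ, hlam, div_pow (Real.goldenConj ^ 2) lam]
    have h1 : Real.sqrt 5 ≠ 0 := ne_of_gt sqrt5_pos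
    have h2 : lam ≠ 0 := ne_of_gt lam_pos
    have h3 : lam ^ (m+1) ≠ 0 := pow_ne_zero _ h2
    have h4 : lam ^ (k+1) ≠ 0 := pow_ne_zero _ h2
    generalize (Real.goldenConj ^ 2) ^ (m+1) = X
    field_simp
  apply Tendsto.congr (fun m => (heq m).symm)
  have hr0 : (0:ℝ) ≤ Real.goldenConj^2/lam := div_nonneg (sq_nonneg _) (le_of_lt lam_pos)
  have hr1 : Real.goldenConj^2/lam < 1 := (div_lt_one lam_pos).mpr gc_sq_lt
  have h0 : Tendsto (fun n : ℕ => (Real.goldenConj^2/lam) ^ n) atTop (𝓝 0) :=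
    tendsto_pow_atTop_nhds_zero_of_lt_one hr0 hr1
  have h1 : Tendsto (fun m : ℕ => (Real.goldenConj^2/lam) ^ (m+1)) atTop (𝓝 0) :=
    h0.comp (tendsto_add_atTop_nat 1)
  have := (tendsto_const_nhds (x := (1:ℝ)).sub h1).const_mul
    (Real.log 2 / (Real.sqrt 5 * lam ^ (k+1)))
  simpa using this

lemma dv_nonpos (m : ℕ) : ∀ i, dv m i ≤ 0 := by
  intro i
  fin_cases i
  · show -(Nat.fib (2*m) : ℤ) ≤ 0
    simp
  · show (Nat.fib (2*m) : ℤ) - (Nat.fib (2*m+1) : ℤ) ≤ 0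
    have : Nat.fib (2*m) ≤ Nat.fib (2*m+1) := Nat.fib_mono (by omega)
    omega

lemma dv_max (m : ℕ) (hm : 1 ≤ m) :
    max (-(dv m 0)) (-(dv m 1)) = (Nat.fib (2*m) : ℤ) := by
  have h0 : dv m 0 = -(Nat.fib (2*m) : ℤ) := rfl
  have h1 : dv m 1 = (Nat.fib (2*m) : ℤ) - (Nat.fib (2*m+1) : ℤ) := rfl
  rw [h0, h1, neg_neg]
  apply max_eq_left
  obtain ⟨j, rfl⟩ : ∃ j, m = j + 1 := ⟨m - 1, by omega⟩
  have hf : Nat.fib (2*(j+1)+1) = Nat.fib (2*j+1) + Nat.fib (2*j+2) := by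
    rw [show 2*(j+1)+1 = (2*j+1)+2 from rfl, Nat.fib_add_two]
  have hmono : Nat.fib (2*j+1) ≤ Nat.fib (2*j+2) := Nat.fib_mono (by omega)
  have : Nat.fib (2*(j+1)) = Nat.fib (2*j+2) := by norm_num [Nat.mul_add]
  omega

lemma hatHeightA_Pt (k : ℕ) :
    hatHeightA (Pt k) = Real.log 2 / (Real.sqrt 5 * lam ^ (k+1)) := by
  have hev : (fun n : ℕ =>
      uHeight ℚ ((phi (!![2, 1; 1, 1] : Matrix (Fin 2) (Fin 2) ℤ))^[n] (Pt k)) /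
        ((3 + Real.sqrt 5) / 2) ^ n)
      =ᶠ[atTop] (fun n : ℕ => Real.log 2 * (Nat.fib (2*(n - (k+1))) : ℝ) / lam ^ n) := by
    filter_upwards [eventually_ge_atTop (k+2)] with n hn
    have hmn : n = k+1+(n-(k+1)) := by omega
    set m := n - (k+1) with hmdef
    have hm1 : 1 ≤ m := by omega
    have hit : (phi A2)^[n] (Pt k) = fun i => u2 ^ (dv m i) := by
      rw [show Pt k = fun j => u2 ^ (yv k j) from rfl, phi_iterate_zpow]
      conv_lhs => rw [hmn]
      rw [main_exp]
    have huh : uHeight ℚ ((phi A2)^[n] (Pt k)) = ((Nat.fib (2*m) : ℤ) : ℝ) * Real.log 2 := by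
      rw [hit, uHeight_u2_zpow _ (dv_nonpos m), dv_max m hm1]
    show uHeight ℚ ((phi A2)^[n] (Pt k)) / ((3 + Real.sqrt 5) / 2) ^ n
      = Real.log 2 * (Nat.fib (2*m) : ℝ) / lam ^ n
    rw [huh, show ((3 + Real.sqrt 5)/2 : ℝ) = lam from rfl]
    push_cast
    ring
  have h0 : hatHeightA (Pt k) = Filter.limsup (fun n : ℕ =>
      uHeight ℚ ((phi (!![2, 1; 1, 1] : Matrix (Fin 2) (Fin 2) ℤ))^[n] (Pt k)) /
        ((3 + Real.sqrt 5) / 2) ^ n) Filter.atTop := rfl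
  rw [h0, limsup_congr hev]
  exact (key_tendsto k).limsup_eq

end Aux

/-- For every ε > 0 there is a point of 𝔾_m²(ℚ) with 0 < ĥ_A⁺(P) < ε;
in particular the set of points of canonical height < ε is infinite. -/
theorem statement3 (ε : ℝ) (hε : 0 < ε) :
    (∃ P : Fin 2 → ℚˣ, 0 < hatHeightA P ∧ hatHeightA P < ε) ∧
    {P : Fin 2 → ℚˣ | hatHeightA P < ε}.Infinite := by
  have hL : ∀ k : ℕ, hatHeightA (Pt k) = Real.log 2 / (Real.sqrt 5 * lam ^ (k+1)) :=
    hatHeightA_Pt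
  have hlog : 0 < Real.log 2 := Real.log_pos one_lt_two
  have h5 : 0 < Real.sqrt 5 := sqrt5_pos
  have hlam := lam_pos
  have hpos : ∀ k, 0 < hatHeightA (Pt k) := by
    intro k
    rw [hL]
    exact div_pos hlog (by positivity)
  obtain ⟨n0, hn0⟩ := pow_unbounded_of_one_lt (Real.log 2 / (Real.sqrt 5 * ε)) one_lt_lam
  have hkey : ∀ j : ℕ, hatHeightA (Pt (n0 + j)) < ε := by
    intro j
    rw [hL]
    have hle : lam ^ n0 ≤ lam ^ (n0 + j + 1) :=
      pow_le_pow_right₀ (le_of_lt one_lt_lam) (by omega)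
    have hlampos : (0:ℝ) < lam ^ (n0+j+1) := pow_pos lam_pos _
    rw [div_lt_iff₀ (by positivity)]
    have hlt : Real.log 2 / (Real.sqrt 5 * ε) < lam ^ (n0+j+1) := lt_of_lt_of_le hn0 hle
    rw [div_lt_iff₀ (by positivity)] at hlt
    nlinarith
  have hinj : Function.Injective (fun j : ℕ => Pt (n0 + j)) := by
    intro a b hab
    have heq : hatHeightA (Pt (n0+a)) = hatHeightA (Pt (n0+b)) := congrArg hatHeightA hab
    rw [hL, hL] at heq
    have hpa : (0:ℝ) < Real.sqrt 5 * lam ^ (n0+a+1) := by positivity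
    have hpb : (0:ℝ) < Real.sqrt 5 * lam ^ (n0+b+1) := by positivity
    rw [div_eq_div_iff (ne_of_gt hpa) (ne_of_gt hpb)] at heq
    have hppow : lam ^ (n0+a+1) = lam ^ (n0+b+1) := by
      have h1 : Real.sqrt 5 * lam ^ (n0+b+1) = Real.sqrt 5 * lam ^ (n0+a+1) :=
        mul_left_cancel₀ (ne_of_gt hlog) heq
      have h2 : lam ^ (n0+b+1) = lam ^ (n0+a+1) :=
        mul_left_cancel₀ (ne_of_gt h5) h1
      exact h2.symm
    have := (pow_right_strictMono₀ one_lt_lam).injective hppow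
    omega
  constructor
  · exact ⟨Pt n0, hpos n0, by simpa using hkey 0⟩
  · exact Set.infinite_of_injective_forall_mem hinj (fun j => hkey j)
end
end

section
/- Let A ∈ Mat_N(ℤ) with ρ(A) > 1, nonzero determinant, D = |det A|, eigenvalues ordered |λ₁| ≥ … ≥ |λ_N|, and A' = D·A^{-1}. Define ĥ_A(P) = ĥ_A⁺(P) + ĥ_{A'}⁺(P). Then for all P ∈ 𝔾_m^N(ℚ̄): ĥ_A(φ_A(P))/|λ₁λ_N| + ĥ_A(φ_{A'}(P))/D = (1/|λ₁| + 1/|λ_N|)·ĥ_A(P). -/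
open Filter NumberField IsDedekindDomain
open scoped Classical

noncomputable section

/-- ℓ_B : the least ℓ such that the entries of Bⁿ grow at most like nℓ·δⁿ
(for monomial maps, deg(φ_B^n) is comparable to the largest entry of Bⁿ, so this is
the exponent ℓ_B with ℓ_B + 1 the size of the largest Jordan block among eigenvalues
of maximal modulus δ = δ_B). -/
def ellOf {M : ℕ} (B : Matrix (Fin M) (Fin M) ℤ) (δ : ℝ) : ℕ :=
  sInf {ℓ : ℕ | ∃ C : ℝ, ∀ n : ℕ, (⨆ i, ⨆ j, |(((B ^ n) i j : ℤ) : ℝ)|) ≤ C * (n : ℝ) ^ ℓ * δ ^ n}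

/-- The canonical height ĥ_B⁺(P) = limsup h(φ_B^n(P))/(n^{ℓ_B}·δ_Bⁿ). -/
def hatPlus (K : Type*) [Field K] [NumberField K] {M : ℕ}
    (B : Matrix (Fin M) (Fin M) ℤ) (δ : ℝ) (P : Fin M → Kˣ) : ℝ :=
  Filter.limsup
    (fun n : ℕ => uHeight K ((phi B)^[n] P) / ((n : ℝ) ^ ellOf B δ * δ ^ n))
    Filter.atTop

/-- The total canonical height ĥ_A = ĥ_A⁺ + ĥ_{A'}⁺, where A' = sgn(det A)·adjugate A
= |det A|·A⁻¹, δ_A = |λ₁| and δ_{A'} = |λ₁⋯λ_{N-1}|. -/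
def hatTotal (K : Type*) [Field K] [NumberField K] {M : ℕ}
    (A : Matrix (Fin M) (Fin M) ℤ) (δA δA' : ℝ) (P : Fin M → Kˣ) : ℝ :=
  hatPlus K A δA P + hatPlus K (A.det.sign • A.adjugate) δA' P

/-! ### Auxiliary limsup lemmas -/

lemma limsup_not_bounded {a : ℕ → ℝ} (hA : ¬ IsBoundedUnder (· ≤ ·) atTop a) :
    limsup a atTop = 0 := by
  rw [limsup_eq]
  have : {x : ℝ | ∀ᶠ n in atTop, a n ≤ x} = ∅ := by
    rw [Set.eq_empty_iff_forall_notMem]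
    intro x hx
    exact hA ⟨x, eventually_map.2 hx⟩
  rw [this, Real.sInf_empty]

lemma limsup_tendsto_atBot {a : ℕ → ℝ} (h : Tendsto a atTop atBot) :
    limsup a atTop = 0 := by
  rw [limsup_eq]
  have : {x : ℝ | ∀ᶠ n in atTop, a n ≤ x} = Set.univ := by
    rw [Set.eq_univ_iff_forall]
    exact fun x => h.eventually_le_atBot x
  rw [this, Real.sInf_of_not_bddBelow not_bddBelow_univ]

lemma limsup_mul_le_aux {a b : ℕ → ℝ} {c : ℝ} (hc : 0 < c) (hb : Tendsto b atTop (nhds c))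
    (hA : IsBoundedUnder (· ≤ ·) atTop a)
    (hC' : IsCoboundedUnder (· ≤ ·) atTop (fun n => b n * a n)) :
    limsup (fun n => b n * a n) atTop ≤ c * limsup a atTop := by
  apply le_of_forall_gt_imp_ge_of_dense
  intro x hx
  set L := limsup a atTop
  have hθ : L < x / c := (lt_div_iff₀ hc).2 (by linarith [hx])
  obtain ⟨θ, hθ1, hθ2⟩ := exists_between hθ
  have h1 : ∀ᶠ n in atTop, a n < θ := eventually_lt_of_limsup_lt hθ1 hA
  have h2 : ∀ᶠ n in atTop, b n * θ < x := by
    have : c * θ < x := by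
      have := (mul_lt_mul_iff_right₀ hc).2 hθ2
      rwa [mul_div_cancel₀ _ (ne_of_gt hc)] at this
    exact (hb.mul_const θ).eventually_lt_const this
  have h3 : ∀ᶠ n in atTop, (0:ℝ) < b n := hb.eventually_const_lt hc
  apply limsup_le_of_le hC'
  filter_upwards [h1, h2, h3] with n e1 e2 e3
  calc b n * a n ≤ b n * θ := mul_le_mul_of_nonneg_left e1.le e3.le
    _ ≤ x := e2.le

lemma limsup_mul_tendsto {a b : ℕ → ℝ} {c : ℝ} (hc : 0 < c)
    (hb : Tendsto b atTop (nhds c)) :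
    limsup (fun n => b n * a n) atTop = c * limsup a atTop := by
  have hbpos : ∀ᶠ n in atTop, (0:ℝ) < b n := hb.eventually_const_lt hc
  by_cases hC : IsCoboundedUnder (· ≤ ·) atTop a
  · by_cases hA : IsBoundedUnder (· ≤ ·) atTop a
    · obtain ⟨M, hM⟩ := id hA
      rw [eventually_map] at hM
      have hblt : ∀ᶠ n in atTop, b n < c + 1 := hb.eventually_lt_const (lt_add_one c)
      have hA' : IsBoundedUnder (· ≤ ·) atTop (fun n => b n * a n) := by
        refine ⟨(c+1) * max M 0, eventually_map.2 ?_⟩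
        filter_upwards [hM, hblt, hbpos] with n e1 e2 e3
        calc b n * a n ≤ b n * max M 0 :=
              mul_le_mul_of_nonneg_left (e1.trans (le_max_left _ _)) e3.le
          _ ≤ (c+1) * max M 0 := mul_le_mul_of_nonneg_right e2.le (le_max_right _ _)
      have hC' : IsCoboundedUnder (· ≤ ·) atTop (fun n => b n * a n) := by
        obtain ⟨m, hm⟩ := hC.frequently_ge
        apply IsCoboundedUnder.of_frequently_ge (a := min (c/2 * m) ((c+1) * m))
        have hb2 : ∀ᶠ n in atTop, c/2 < b n := hb.eventually_const_lt (by linarith)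
        refine (hm.and_eventually (hb2.and hblt)).mono ?_
        rintro n ⟨e1, e2, e3⟩
        have hbn : (0:ℝ) < b n := lt_trans (by linarith) e2
        have : min (c/2 * m) ((c+1) * m) ≤ b n * m := by
          rcases le_or_gt 0 m with hm0 | hm0
          · exact (min_le_left _ _).trans (mul_le_mul_of_nonneg_right e2.le hm0)
          · exact (min_le_right _ _).trans (mul_le_mul_of_nonpos_right e3.le hm0.le)
        exact this.trans (mul_le_mul_of_nonneg_left e1 hbn.le)
      apply le_antisymm (limsup_mul_le_aux hc hb hA hC')
      have hbinv : Tendsto (fun n => (b n)⁻¹) atTop (nhds c⁻¹) := hb.inv₀ (ne_of_gt hc)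
      have key := limsup_mul_le_aux (a := fun n => b n * a n) (b := fun n => (b n)⁻¹)
        (inv_pos.2 hc) hbinv hA' ?_
      · have heq : limsup (fun n => (b n)⁻¹ * (b n * a n)) atTop = limsup a atTop := by
          apply limsup_congr
          filter_upwards [hbpos] with n e1
          rw [← mul_assoc, inv_mul_cancel₀ (ne_of_gt e1), one_mul]
        rw [heq] at key
        calc c * limsup a atTop ≤ c * (c⁻¹ * limsup (fun n => b n * a n) atTop) :=
              mul_le_mul_of_nonneg_left key hc.le
          _ = limsup (fun n => b n * a n) atTop := by
              rw [← mul_assoc, mul_inv_cancel₀ (ne_of_gt hc), one_mul]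
      · obtain ⟨m, hm⟩ := hC.frequently_ge
        apply IsCoboundedUnder.of_frequently_ge (a := m)
        refine (hm.and_eventually hbpos).mono ?_
        rintro n ⟨e1, e2⟩
        rw [← mul_assoc, inv_mul_cancel₀ (ne_of_gt e2), one_mul]
        exact e1
    · have h1 : limsup a atTop = 0 := limsup_not_bounded hA
      have h2 : ¬ IsBoundedUnder (· ≤ ·) atTop (fun n => b n * a n) := by
        rintro ⟨M, hM⟩
        rw [eventually_map] at hM
        apply hA
        have hb2 : ∀ᶠ n in atTop, c/2 < b n := hb.eventually_const_lt (by linarith)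
        refine ⟨max 0 (M / (c/2)), eventually_map.2 ?_⟩
        filter_upwards [hM, hb2] with n e1 e2
        rcases le_or_gt (a n) 0 with h | h
        · exact h.trans (le_max_left _ _)
        · have hc2 : (0:ℝ) < c/2 := by linarith
          have : c/2 * a n ≤ M := le_trans (mul_le_mul_of_nonneg_right e2.le h.le) e1
          exact le_trans ((le_div_iff₀ hc2).2 (by linarith [this])) (le_max_right _ _)
      rw [h1, limsup_not_bounded h2, mul_zero]
  · have ha_bot : Tendsto a atTop atBot := by
      rw [tendsto_atBot]
      intro x
      by_contra hcon
      apply hC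
      refine ⟨x, fun y hy => ?_⟩
      rw [eventually_map] at hy
      by_contra hxy
      push_neg at hxy
      exact hcon (hy.mono fun n hn => hn.trans hxy.le)
    have hba_bot : Tendsto (fun n => b n * a n) atTop atBot := by
      rw [tendsto_atBot]
      intro x
      have hb2 : ∀ᶠ n in atTop, c/2 < b n := hb.eventually_const_lt (by linarith)
      filter_upwards [hb2, ha_bot.eventually_le_atBot (min x 0 / (c/2))] with n e1 e2
      have hc2 : (0:ℝ) < c/2 := by linarith
      have han : a n ≤ 0 :=
        e2.trans (div_nonpos_iff.2 (Or.inr ⟨min_le_right x 0, hc2.le⟩))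
      calc b n * a n ≤ c/2 * a n := mul_le_mul_of_nonpos_right e1.le han
        _ ≤ c/2 * (min x 0 / (c/2)) := mul_le_mul_of_nonneg_left e2 hc2.le
        _ = min x 0 := mul_div_cancel₀ _ (ne_of_gt hc2)
        _ ≤ x := min_le_left _ _
    rw [limsup_tendsto_atBot ha_bot, limsup_tendsto_atBot hba_bot, mul_zero]

/-! ### Monomial map algebra -/

lemma zpow_finset_sum {G : Type*} [CommGroup G] {ι : Type*} (x : G) (s : Finset ι)
    (c : ι → ℤ) : x ^ (∑ j ∈ s, c j) = ∏ j ∈ s, x ^ c j := by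
  induction s using Finset.cons_induction with
  | empty => simp
  | cons a s ha ih => rw [Finset.sum_cons, Finset.prod_cons, zpow_add, ih]

lemma phi_phi {G : Type*} [CommGroup G] {N : ℕ} (A B : Matrix (Fin N) (Fin N) ℤ)
    (x : Fin N → G) : phi A (phi B x) = phi (A * B) x := by
  funext i
  simp only [phi, Matrix.mul_apply]
  calc (∏ j, (∏ k, x k ^ B j k) ^ A i j)
      = ∏ j, ∏ k, (x k ^ B j k) ^ A i j := by
        refine Finset.prod_congr rfl fun j _ => ?_
        rw [Finset.prod_zpow]
    _ = ∏ k, ∏ j, (x k ^ B j k) ^ A i j := Finset.prod_comm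
    _ = ∏ k, x k ^ (∑ j, A i j * B j k) := by
        refine Finset.prod_congr rfl fun k _ => ?_
        rw [zpow_finset_sum]
        refine Finset.prod_congr rfl fun j _ => ?_
        rw [← zpow_mul, mul_comm (A i j)]

lemma phi_iterate {G : Type*} [CommGroup G] {N : ℕ} (B : Matrix (Fin N) (Fin N) ℤ)
    (x : Fin N → G) (n : ℕ) : (phi B)^[n] x = phi (B ^ n) x := by
  induction n with
  | zero => funext i; simp [phi, Matrix.one_apply, pow_zero]
  | succ n ih =>
    rw [Function.iterate_succ_apply', ih, phi_phi, ← pow_succ']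

lemma phi_smul {G : Type*} [CommGroup G] {N : ℕ} (d : ℤ) (B : Matrix (Fin N) (Fin N) ℤ)
    (x : Fin N → G) : phi (d • B) x = fun i => (phi B x i) ^ d := by
  funext i
  simp only [phi, Matrix.smul_apply, smul_eq_mul, ← Finset.prod_zpow]
  refine Finset.prod_congr rfl fun j _ => ?_
  rw [← zpow_mul, mul_comm]

/-! ### Height under powers -/

lemma finVal_zpow (K : Type*) [Field K] [NumberField K] (v : HeightOneSpectrum (𝓞 K))
    {a : K} (ha : a ≠ 0) (d : ℤ) : finVal K v (a ^ d) = d * finVal K v a := by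
  have hpow : a ^ d ≠ 0 := zpow_ne_zero d ha
  rw [finVal, finVal, dif_neg hpow, dif_neg ha]
  have key : WithZero.unzero ((v.valuation K).ne_zero_iff.mpr hpow) =
      (WithZero.unzero ((v.valuation K).ne_zero_iff.mpr ha)) ^ d := by
    rw [← WithZero.coe_inj, WithZero.coe_zpow, WithZero.coe_unzero, WithZero.coe_unzero,
      map_zpow₀]
  rw [key, toAdd_zpow, smul_eq_mul]
  push_cast
  ring

lemma uHeight_zpow (K : Type*) [Field K] [NumberField K] {M : ℕ} (x : Fin M → Kˣ)
    {d : ℤ} (hd : 0 < d) : uHeight K (fun i => x i ^ d) = (d : ℝ) * uHeight K x := by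
  have hd' : (0:ℝ) ≤ (d:ℝ) := by exact_mod_cast hd.le
  have hmax : ∀ t : ℝ, max 0 ((d:ℝ) * t) = (d:ℝ) * max 0 t := by
    intro t
    rw [mul_max_of_nonneg _ _ hd', mul_zero]
  rw [uHeight, uHeight, logHeight, logHeight]
  have hInf : ∀ w : InfinitePlace K, (⨆ i, max 0 (Real.log (w ((x i ^ d : Kˣ) : K)))) =
      (d:ℝ) * ⨆ i, max 0 (Real.log (w ((x i : K)))) := by
    intro w
    rw [Real.mul_iSup_of_nonneg hd']
    refine iSup_congr fun i => ?_
    rw [Units.val_zpow_eq_zpow_val, map_zpow₀, Real.log_zpow, hmax]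
  have hFin : ∀ v : HeightOneSpectrum (𝓞 K), (⨆ i, max 0 (finVal K v ((x i ^ d : Kˣ) : K))) =
      (d:ℝ) * ⨆ i, max 0 (finVal K v ((x i : K))) := by
    intro v
    rw [Real.mul_iSup_of_nonneg hd']
    refine iSup_congr fun i => ?_
    rw [Units.val_zpow_eq_zpow_val, finVal_zpow K v (Units.ne_zero (x i)) d, hmax]
  have h1 : ∑ w : InfinitePlace K, (w.mult : ℝ) * ⨆ i, max 0 (Real.log (w ((x i ^ d : Kˣ) : K)))
      = (d:ℝ) * ∑ w : InfinitePlace K, (w.mult : ℝ) * ⨆ i, max 0 (Real.log (w ((x i : K)))) := by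
    rw [Finset.mul_sum]
    refine Finset.sum_congr rfl fun w _ => ?_
    rw [hInf w]; ring
  have h2 : ∑ᶠ v : HeightOneSpectrum (𝓞 K), ⨆ i, max 0 (finVal K v ((x i ^ d : Kˣ) : K))
      = (d:ℝ) * ∑ᶠ v : HeightOneSpectrum (𝓞 K), ⨆ i, max 0 (finVal K v ((x i : K))) := by
    rw [show ((d:ℝ) * ∑ᶠ v : HeightOneSpectrum (𝓞 K), ⨆ i, max 0 (finVal K v ((x i : K))))
      = (d:ℝ) • ∑ᶠ v : HeightOneSpectrum (𝓞 K), ⨆ i, max 0 (finVal K v ((x i : K))) from rfl,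
      smul_finsum]
    exact finsum_congr fun v => by rw [hFin v, smul_eq_mul]
  rw [h1, h2]
  ring

/-! ### Functional equations for hatPlus -/

lemma tendsto_one_add_inv : Tendsto (fun n : ℕ => 1 + (n:ℝ)⁻¹) atTop (nhds 1) := by
  have := tendsto_const_nhds (α := ℕ) (f := atTop) (x := (1:ℝ))
  simpa using this.add tendsto_inv_atTop_nhds_zero_nat

lemma hatPlus_phi_self (K : Type*) [Field K] [NumberField K] {M : ℕ}
    (B : Matrix (Fin M) (Fin M) ℤ) {δ : ℝ} (hδ : 0 < δ) (P : Fin M → Kˣ) :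
    hatPlus K B δ (phi B P) = δ * hatPlus K B δ P := by
  unfold hatPlus
  set ℓ := ellOf B δ with hℓ
  set t : ℕ → ℝ := fun n => uHeight K (phi (B ^ n) P) / ((n:ℝ) ^ ℓ * δ ^ n) with ht
  have hb : Tendsto (fun n : ℕ => δ * (1 + (n:ℝ)⁻¹) ^ ℓ) atTop (nhds δ) := by
    have := (tendsto_one_add_inv.pow ℓ).const_mul δ
    simpa using this
  have heq : ∀ᶠ n in atTop,
      uHeight K ((phi B)^[n] (phi B P)) / ((n:ℝ) ^ ℓ * δ ^ n)
        = (δ * (1 + (n:ℝ)⁻¹) ^ ℓ) * t (n + 1) := by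
    filter_upwards [eventually_ge_atTop 1] with n hn
    have hn0 : (0:ℝ) < (n:ℝ) := by exact_mod_cast hn
    rw [phi_iterate, phi_phi, ← pow_succ]
    simp only [ht]
    push_cast
    have h1 : (1 + (n:ℝ)⁻¹) = ((n:ℝ) + 1) / n := by field_simp
    rw [h1, div_pow]
    have hne1 : (n:ℝ) ≠ 0 := ne_of_gt hn0
    have hne2 : ((n:ℝ) + 1) ≠ 0 := by positivity
    have hδ' : δ ≠ 0 := ne_of_gt hδ
    field_simp
    ring
  calc limsup (fun n : ℕ => uHeight K ((phi B)^[n] (phi B P)) / ((n:ℝ) ^ ℓ * δ ^ n)) atTop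
      = limsup (fun n : ℕ => (δ * (1 + (n:ℝ)⁻¹) ^ ℓ) * t (n + 1)) atTop := limsup_congr heq
    _ = δ * limsup (fun n : ℕ => t (n + 1)) atTop := limsup_mul_tendsto hδ hb
    _ = δ * limsup t atTop := congrArg (fun z => δ * z) (limsup_nat_add t 1)
    _ = δ * limsup (fun n : ℕ => uHeight K ((phi B)^[n] P) / ((n:ℝ) ^ ℓ * δ ^ n)) atTop := by
        refine congrArg (fun z => δ * z) (limsup_congr ?_)
        filter_upwards with n
        simp only [ht, phi_iterate]

lemma hatPlus_phi_mul (K : Type*) [Field K] [NumberField K] {M : ℕ}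
    (B C : Matrix (Fin M) (Fin M) ℤ) {δ : ℝ} (hδ : 0 < δ) {d : ℤ} (hd : 0 < d)
    (hBC : B * C = (d • 1 : Matrix (Fin M) (Fin M) ℤ)) (P : Fin M → Kˣ) :
    hatPlus K B δ (phi C P) = ((d:ℝ) / δ) * hatPlus K B δ P := by
  unfold hatPlus
  set ℓ := ellOf B δ with hℓ
  set t : ℕ → ℝ := fun n => uHeight K (phi (B ^ n) P) / ((n:ℝ) ^ ℓ * δ ^ n) with ht
  set s : ℕ → ℝ :=
    fun n => uHeight K ((phi B)^[n] (phi C P)) / ((n:ℝ) ^ ℓ * δ ^ n) with hs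
  have hdpos : (0:ℝ) < (d:ℝ) / δ := by positivity
  have hb : Tendsto (fun n : ℕ => ((d:ℝ) / δ) * ((1 + (n:ℝ)⁻¹) ^ ℓ)⁻¹) atTop
      (nhds ((d:ℝ) / δ)) := by
    have h1 : Tendsto (fun n : ℕ => ((1 + (n:ℝ)⁻¹) ^ ℓ)⁻¹) atTop (nhds 1) := by
      have := (tendsto_one_add_inv.pow ℓ).inv₀ (by simp : ((1:ℝ))^ℓ ≠ 0)
      simpa using this
    simpa using h1.const_mul ((d:ℝ) / δ)
  have hstep : ∀ n : ℕ, (phi B)^[n + 1] (phi C P) = phi ((d : ℤ) • B ^ n) P := by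
    intro n
    rw [phi_iterate, phi_phi, pow_succ, mul_assoc, hBC, Matrix.mul_smul, mul_one]
  have heq : ∀ᶠ n in atTop, s (n + 1) = (((d:ℝ) / δ) * ((1 + (n:ℝ)⁻¹) ^ ℓ)⁻¹) * t n := by
    filter_upwards [eventually_ge_atTop 1] with n hn
    have hn0 : (0:ℝ) < (n:ℝ) := by exact_mod_cast hn
    rw [hs]
    simp only
    rw [hstep n, phi_smul, uHeight_zpow K _ hd, ht]
    simp only
    push_cast
    have h1 : (1 + (n:ℝ)⁻¹) = ((n:ℝ) + 1) / n := by field_simp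
    rw [h1, div_pow]
    have hne1 : (n:ℝ) ≠ 0 := ne_of_gt hn0
    have hne2 : ((n:ℝ) + 1) ≠ 0 := by positivity
    have hδ' : δ ≠ 0 := ne_of_gt hδ
    field_simp
    ring
  calc limsup s atTop
      = limsup (fun n : ℕ => s (n + 1)) atTop := (limsup_nat_add s 1).symm
    _ = limsup (fun n : ℕ => (((d:ℝ) / δ) * ((1 + (n:ℝ)⁻¹) ^ ℓ)⁻¹) * t n) atTop :=
        limsup_congr heq
    _ = ((d:ℝ) / δ) * limsup t atTop := limsup_mul_tendsto hdpos hb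
    _ = ((d:ℝ) / δ) *
        limsup (fun n : ℕ => uHeight K ((phi B)^[n] P) / ((n:ℝ) ^ ℓ * δ ^ n)) atTop := by
        refine congrArg (fun z => ((d:ℝ) / δ) * z) (limsup_congr ?_)
        filter_upwards with n
        simp only [ht, phi_iterate]

/-- The functional equation of the total canonical height:
ĥ_A(φ_A(P))/|λ₁λ_N| + ĥ_A(φ_{A'}(P))/D = (1/|λ₁| + 1/|λ_N|)·ĥ_A(P). -/
theorem statement9 {N : ℕ} (A : Matrix (Fin (N + 1)) (Fin (N + 1)) ℤ) (hA : A.det ≠ 0)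
    (lam : Fin (N + 1) → ℂ)
    (hchar : (A.map (Int.cast : ℤ → ℂ)).charpoly =
      ∏ i, (Polynomial.X - Polynomial.C (lam i)))
    (hmono : ∀ i j : Fin (N + 1), i ≤ j → ‖lam j‖ ≤ ‖lam i‖)
    (hρ : 1 < ‖lam 0‖)
    (K : Type*) [Field K] [NumberField K] (P : Fin (N + 1) → Kˣ) :
    hatTotal K A (‖lam 0‖) (∏ i : Fin N, ‖lam i.castSucc‖)
        (phi A P) / (‖lam 0‖ * ‖lam (Fin.last N)‖) +
      hatTotal K A (‖lam 0‖) (∏ i : Fin N, ‖lam i.castSucc‖)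
        (phi (A.det.sign • A.adjugate) P) / (A.det.natAbs : ℝ)
    = (1 / ‖lam 0‖ + 1 / ‖lam (Fin.last N)‖) *
        hatTotal K A (‖lam 0‖) (∏ i : Fin N, ‖lam i.castSucc‖) P := by
  set A' := A.det.sign • A.adjugate with hA'
  set δA := ‖lam 0‖ with hδA
  set δA' := ∏ i : Fin N, ‖lam i.castSucc‖ with hδA'
  set Λ := ‖lam (Fin.last N)‖ with hΛ
  set d : ℤ := (A.det.natAbs : ℤ) with hdd
  -- d > 0
  have hd : 0 < d := by
    simp only [hdd]
    exact_mod_cast Int.natAbs_pos.2 hA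
  have hsd : A.det.sign * A.det = d := by
    rcases lt_trichotomy A.det 0 with h | h | h
    · rw [Int.sign_eq_neg_one_of_neg h, hdd]; omega
    · exact absurd h hA
    · rw [Int.sign_eq_one_of_pos h, hdd]; omega
  have hAA' : A * A' = (d • 1 : Matrix (Fin (N+1)) (Fin (N+1)) ℤ) := by
    rw [hA', Matrix.mul_smul, Matrix.mul_adjugate, smul_smul, hsd]
  have hA'A : A' * A = (d • 1 : Matrix (Fin (N+1)) (Fin (N+1)) ℤ) := by
    rw [hA', Matrix.smul_mul, Matrix.adjugate_mul, smul_smul, hsd]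
  have hdetC : ((A.det : ℂ)) = ∏ i, lam i := by
    have h0 := Matrix.det_eq_sign_charpoly_coeff (A.map (Int.cast : ℤ → ℂ))
    rw [hchar] at h0
    have hc : (∏ i, (Polynomial.X - Polynomial.C (lam i))).coeff 0
        = (-1 : ℂ)^(N+1) * ∏ i, lam i := by
      rw [Polynomial.coeff_zero_eq_eval_zero, Polynomial.eval_prod]
      have : ∀ i : Fin (N+1), (Polynomial.X - Polynomial.C (lam i)).eval 0
          = (-1) * lam i := by intro i; simp
      rw [Finset.prod_congr rfl fun i _ => this i, Finset.prod_mul_distrib,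
        Finset.prod_const]
      simp
    rw [hc] at h0
    have hmap : (A.map (Int.cast : ℤ → ℂ)).det = ((A.det : ℂ)) :=
      ((Int.castRingHom ℂ).map_det A).symm
    rw [hmap] at h0
    rw [h0]
    have hcard : Fintype.card (Fin (N+1)) = N+1 := Fintype.card_fin _
    rw [hcard, ← mul_assoc, ← mul_pow]
    simp
  have habs : ((A.det.natAbs : ℝ)) = ∏ i, ‖lam i‖ := by
    have h1 := congrArg (‖·‖) hdetC
    rw [norm_prod, Complex.norm_intCast] at h1
    rw [Nat.cast_natAbs, Int.cast_abs]
    exact h1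
  have hlampos : ∀ i, 0 < ‖lam i‖ := by
    intro i
    have hne : lam i ≠ 0 := by
      intro h
      apply hA
      have h2 : ((A.det : ℂ)) = 0 := by
        rw [hdetC]
        exact Finset.prod_eq_zero (Finset.mem_univ i) h
      exact_mod_cast h2
    exact norm_pos_iff.2 hne
  have hΛpos : 0 < Λ := hlampos _
  have hδApos : 0 < δA := lt_trans one_pos hρ
  have hδA'pos : 0 < δA' := Finset.prod_pos fun i _ => hlampos _
  have hprod : ((A.det.natAbs : ℝ)) = δA' * Λ := by
    rw [habs, Fin.prod_univ_castSucc]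
  have hdR : ((d : ℝ)) = ((A.det.natAbs : ℝ)) := by rw [hdd, Int.cast_natCast]
  have E1 : hatPlus K A δA (phi A P) = δA * hatPlus K A δA P :=
    hatPlus_phi_self K A hδApos P
  have E2 : hatPlus K A' δA' (phi A' P) = δA' * hatPlus K A' δA' P :=
    hatPlus_phi_self K A' hδA'pos P
  have E3 : hatPlus K A δA (phi A' P) = ((d:ℝ)/δA) * hatPlus K A δA P :=
    hatPlus_phi_mul K A A' hδApos hd hAA' P
  have E4 : hatPlus K A' δA' (phi A P) = ((d:ℝ)/δA') * hatPlus K A' δA' P :=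
    hatPlus_phi_mul K A' A hδA'pos hd hA'A P
  simp only [hatTotal]
  rw [E1, E2, E3, E4, hdR, hprod, ← hA']
  have hδAne : δA ≠ 0 := ne_of_gt hδApos
  have hδA'ne : δA' ≠ 0 := ne_of_gt hδA'pos
  have hΛne : Λ ≠ 0 := ne_of_gt hΛpos
  field_simp
  ring
end
end

section
/- Let A ∈ Mat_N(ℤ) be diagonalizable over ℂ with nonzero determinant, and suppose all eigenvalues of A have the same modulus |λ| = ρ(A). Then there exists a strictly increasing sequence of positive integers (n_r) such that A^{n_r}/|λ|^{n_r} → I_N as r → ∞. -/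
open Filter

-- recurrence lemma
lemma myrec {N : ℕ} (w : Fin N → ℂ) (hw : ∀ i, ‖w i‖ = 1)
    {ε : ℝ} (hε : 0 < ε) (M : ℕ) :
    ∃ n : ℕ, M < n ∧ ∀ i, ‖w i ^ n - 1‖ < ε := by
  set g : ℕ → (Fin N → ℂ) := fun m i => w i ^ (m * (M + 1)) with hg
  have hmem : ∀ m, g m ∈ Set.pi Set.univ (fun _ : Fin N => Metric.sphere (0:ℂ) 1) := by
    intro m i _
    simp [g, Complex.dist_eq, map_pow, hw i]
  have hcpt : IsCompact (Set.pi Set.univ (fun _ : Fin N => Metric.sphere (0:ℂ) 1)) :=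
    isCompact_univ_pi fun _ => isCompact_sphere 0 1
  obtain ⟨x, -, φ, hφ, hconv⟩ := hcpt.tendsto_subseq hmem
  have hcauchy := hconv.cauchySeq
  rw [Metric.cauchySeq_iff] at hcauchy
  obtain ⟨K, hK⟩ := hcauchy ε hε
  have hlt : φ K < φ (K + 1) := hφ (Nat.lt_succ_self K)
  refine ⟨(φ (K + 1) - φ K) * (M + 1), ?_, ?_⟩
  · have h1 : 1 ≤ φ (K + 1) - φ K := by omega
    calc M < M + 1 := Nat.lt_succ_self M
      _ = 1 * (M + 1) := (one_mul _).symm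
      _ ≤ (φ (K + 1) - φ K) * (M + 1) := Nat.mul_le_mul_right _ h1
  · intro i
    have hd := hK K le_rfl (K+1) (Nat.le_succ K)
    have hdi : dist (g (φ K) i) (g (φ (K+1)) i) < ε :=
      lt_of_le_of_lt (dist_le_pi_dist _ _ i) hd
    have key : g (φ (K+1)) i - g (φ K) i
        = w i ^ (φ K * (M+1)) * (w i ^ ((φ (K+1) - φ K) * (M+1)) - 1) := by
      rw [mul_sub, mul_one, ← pow_add, ← add_mul, Nat.add_sub_cancel' hlt.le]
    have habs : ‖w i ^ (φ K * (M+1))‖ = 1 := by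
      rw [norm_pow, hw i, one_pow]
    calc ‖w i ^ ((φ (K + 1) - φ K) * (M + 1)) - 1‖
        = ‖w i ^ (φ K * (M+1))‖ * ‖w i ^ ((φ (K + 1) - φ K) * (M + 1)) - 1‖ := by
          rw [habs, one_mul]
      _ = ‖g (φ (K+1)) i - g (φ K) i‖ := by rw [← norm_mul, ← key]
      _ = dist (g (φ K) i) (g (φ (K+1)) i) := by
          rw [Complex.dist_eq, ← norm_neg]; ring_nf
      _ < ε := hdi

lemma myseq {N : ℕ} (w : Fin N → ℂ) (hw : ∀ i, ‖w i‖ = 1) :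
    ∃ n : ℕ → ℕ, StrictMono n ∧ (∀ k, 0 < n k) ∧
      ∀ i, Tendsto (fun k => w i ^ n k) atTop (nhds 1) := by
  have key : ∀ k M : ℕ, ∃ m : ℕ, M < m ∧ ∀ i, ‖w i ^ m - 1‖ < 1 / (k + 1) :=
    fun k M => myrec w hw (by positivity) M
  let f : ℕ → ℕ → ℕ := fun k M => (key k M).choose
  let n : ℕ → ℕ := fun k => Nat.rec (f 0 0) (fun k ih => f (k+1) ih) k
  have hn0 : n 0 = f 0 0 := rfl
  have hns : ∀ k, n (k+1) = f (k+1) (n k) := fun k => rfl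
  have hb : ∀ k, ∀ i, ‖w i ^ n k - 1‖ < 1 / (k + 1) := by
    intro k
    cases k with
    | zero => exact (key 0 0).choose_spec.2
    | succ k => rw [hns k]; exact (key (k+1) (n k)).choose_spec.2
  have hmono : StrictMono n := by
    apply strictMono_nat_of_lt_succ
    intro k
    rw [hns k]
    exact (key (k+1) (n k)).choose_spec.1
  have hpos : ∀ k, 0 < n k := by
    intro k
    have h0 : 0 < n 0 := (key 0 0).choose_spec.1
    calc 0 < n 0 := h0
      _ ≤ n k := hmono.monotone (Nat.zero_le k)
  refine ⟨n, hmono, hpos, fun i => ?_⟩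
  rw [tendsto_iff_dist_tendsto_zero]
  refine squeeze_zero (g := fun k : ℕ => 1 / (k + 1)) (fun k => dist_nonneg)
    (fun k => ?_) tendsto_one_div_add_atTop_nhds_zero_nat
  rw [Complex.dist_eq]
  exact (hb k i).le

lemma myconj {n : ℕ} {B D : Matrix (Fin n) (Fin n) ℂ} (hB : IsUnit B.det) (k : ℕ) :
    (B * D * B⁻¹) ^ k = B * D ^ k * B⁻¹ := by
  induction k with
  | zero => simp [Matrix.mul_nonsing_inv B hB]
  | succ k ih =>
      rw [pow_succ, ih, pow_succ]
      have : B⁻¹ * (B * D * B⁻¹) = D * B⁻¹ := by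
        rw [← Matrix.mul_assoc, ← Matrix.mul_assoc, Matrix.nonsing_inv_mul B hB, Matrix.one_mul]
      rw [Matrix.mul_assoc (B * D ^ k), this, ← Matrix.mul_assoc, ← Matrix.mul_assoc]


/-- If A ∈ Mat_N(ℤ) is diagonalizable over ℂ with nonzero determinant and all eigenvalues
of the same modulus r, then there is a strictly increasing sequence of positive integers
n_r with A^{n_r}/r^{n_r} → I_N. -/
theorem statement11 {N : ℕ} (A : Matrix (Fin N) (Fin N) ℤ) (hA : A.det ≠ 0)
    (B : Matrix (Fin N) (Fin N) ℂ) (hB : IsUnit B.det) (lam : Fin N → ℂ) (r : ℝ)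
    (hdiag : A.map (Int.cast : ℤ → ℂ) = B * Matrix.diagonal lam * B⁻¹)
    (hmod : ∀ i, ‖lam i‖ = r) :
    ∃ n : ℕ → ℕ, StrictMono n ∧ (∀ k, 0 < n k) ∧
      Filter.Tendsto (fun k => (r ^ n k)⁻¹ • (A ^ n k).map (Int.cast : ℤ → ℂ))
        Filter.atTop (nhds 1) := by
  rcases Nat.eq_zero_or_pos N with h0 | hN
  · subst h0
    refine ⟨fun k => k + 1, fun a b h => Nat.succ_lt_succ h, fun k => Nat.succ_pos k, ?_⟩
    have heq : ∀ x y : Matrix (Fin 0) (Fin 0) ℂ, x = y := fun x y => by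
      ext i j; exact i.elim0
    have : (fun k : ℕ => (r ^ (k+1))⁻¹ • (A ^ (k+1)).map (Int.cast : ℤ → ℂ))
        = fun _ => (1 : Matrix (Fin 0) (Fin 0) ℂ) := funext fun k => heq _ _
    rw [this]
    exact tendsto_const_nhds
  -- N > 0 : show r > 0
  have hdetmap : (A.map (Int.cast : ℤ → ℂ)).det ≠ 0 := by
    have : (A.map (Int.cast : ℤ → ℂ)).det = ((A.det : ℤ) : ℂ) := by
      exact (RingHom.map_det (Int.castRingHom ℂ) A).symm
    rw [this]
    exact_mod_cast hA
  have hprod : (∏ i, lam i) ≠ 0 := by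
    intro hzero
    apply hdetmap
    rw [hdiag, Matrix.det_mul, Matrix.det_mul, Matrix.det_diagonal, hzero,
      mul_zero, zero_mul]
  have hlamne : ∀ i, lam i ≠ 0 := by
    intro i hi
    exact hprod (Finset.prod_eq_zero (Finset.mem_univ i) hi)
  have hr : 0 < r := by
    have := hmod ⟨0, hN⟩
    rw [← this]
    exact norm_pos_iff.mpr (hlamne _)
  set w : Fin N → ℂ := fun i => lam i / (r : ℂ) with hw
  have hwabs : ∀ i, ‖w i‖ = 1 := by
    intro i
    rw [hw]
    simp [norm_div, hmod i, abs_of_pos hr, div_self hr.ne']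
  obtain ⟨n, hmono, hpos, htend⟩ := myseq w hwabs
  refine ⟨n, hmono, hpos, ?_⟩
  -- rewrite the function
  have hfun : ∀ k, (r ^ n k)⁻¹ • (A ^ n k).map (Int.cast : ℤ → ℂ)
      = B * Matrix.diagonal (fun i => w i ^ n k) * B⁻¹ := by
    intro k
    have hmap : (A ^ n k).map (Int.cast : ℤ → ℂ)
        = (A.map (Int.cast : ℤ → ℂ)) ^ n k := by
      have := map_pow ((Int.castRingHom ℂ).mapMatrix) A (n k)
      simpa using this
    have hdiagonal : (r ^ n k : ℝ)⁻¹ • Matrix.diagonal (lam ^ n k)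
        = Matrix.diagonal (fun i => w i ^ n k) := by
      ext i j
      rcases eq_or_ne i j with hij | hij
      · subst hij
        simp only [Matrix.smul_apply, Matrix.diagonal_apply_eq, Pi.pow_apply, hw, div_pow,
          Complex.real_smul]
        have hrne : ((r : ℂ)) ^ n k ≠ 0 := pow_ne_zero _ (by exact_mod_cast hr.ne')
        push_cast
        field_simp
      · simp [Matrix.diagonal_apply_ne _ hij]
    rw [hmap, hdiag, myconj hB, Matrix.diagonal_pow, ← smul_mul_assoc, ← mul_smul_comm,
      hdiagonal]
  have hfun' : (fun k => (r ^ n k)⁻¹ • (A ^ n k).map (Int.cast : ℤ → ℂ))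
      = fun k => B * Matrix.diagonal (fun i => w i ^ n k) * B⁻¹ := funext hfun
  rw [hfun']
  have hcont : Continuous (fun d : Fin N → ℂ => B * Matrix.diagonal d * B⁻¹) := by
    apply Continuous.matrix_mul
    · exact Continuous.matrix_mul continuous_const (Continuous.matrix_diagonal continuous_id)
    · exact continuous_const
  have hpi : Tendsto (fun k => (fun i => w i ^ n k)) atTop (nhds (1 : Fin N → ℂ)) := by
    rw [tendsto_pi_nhds]
    intro i
    exact htend i
  have := (hcont.tendsto (1 : Fin N → ℂ)).comp hpi
  simp only [Function.comp_def] at this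
  have h1 : B * Matrix.diagonal (1 : Fin N → ℂ) * B⁻¹ = 1 := by
    rw [show (1 : Fin N → ℂ) = fun _ => (1 : ℂ) from rfl, Matrix.diagonal_one,
      Matrix.mul_one, Matrix.mul_nonsing_inv B hB]
  rw [h1] at this
  exact this
end

section
/- Let A ∈ Mat_N(ℤ) be diagonalizable whose eigenvalues have exactly two distinct moduli |λ| > |μ|, with nonzero determinant, and let A' = |det A|·A^{-1}. Then for all P ∈ 𝔾_m^N(ℚ̄), ĥ_A(P) := ĥ_A⁺(P) + ĥ_{A'}⁺(P) ≥ h(P). -/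
open Filter NumberField IsDedekindDomain
open scoped Classical

noncomputable section

namespace Statement13Aux

open scoped Topology

/-! ### Generic lemmas about `phi` -/

theorem zpow_finset_sum {G : Type*} [CommGroup G] (x : G) {ι : Type*} (s : Finset ι)
    (m : ι → ℤ) : x ^ (∑ k ∈ s, m k) = ∏ k ∈ s, x ^ m k := by
  classical
  induction s using Finset.cons_induction with
  | empty => simp
  | cons a s ha ih => rw [Finset.sum_cons, Finset.prod_cons, zpow_add, ih]

theorem phi_mul {G : Type*} [CommGroup G] {N : ℕ} (A B : Matrix (Fin N) (Fin N) ℤ)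
    (x : Fin N → G) : phi (A * B) x = phi A (phi B x) := by
  funext i
  simp only [phi]
  have h1 : ∀ k, (∏ j, x j ^ B k j) ^ A i k = ∏ j, x j ^ (A i k * B k j) := by
    intro k
    rw [← Finset.prod_zpow]
    refine Finset.prod_congr rfl fun j _ => ?_
    rw [← zpow_mul, mul_comm (B k j)]
  calc ∏ j, x j ^ (A * B) i j
      = ∏ j, x j ^ (∑ k, A i k * B k j) :=
        Finset.prod_congr rfl fun j _ => by rw [Matrix.mul_apply]
    _ = ∏ j, ∏ k, x j ^ (A i k * B k j) :=
        Finset.prod_congr rfl fun j _ => zpow_finset_sum _ _ _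
    _ = ∏ k, ∏ j, x j ^ (A i k * B k j) := Finset.prod_comm
    _ = ∏ k, (∏ j, x j ^ B k j) ^ A i k := Finset.prod_congr rfl fun k _ => (h1 k).symm

theorem phi_one {G : Type*} [CommGroup G] {N : ℕ} (x : Fin N → G) :
    phi (1 : Matrix (Fin N) (Fin N) ℤ) x = x := by
  funext i
  simp only [phi, Matrix.one_apply]
  rw [Finset.prod_eq_single i (fun j _ hj => by simp [Ne.symm hj]) (by simp)]
  simp

theorem phi_pow {G : Type*} [CommGroup G] {N : ℕ} (A : Matrix (Fin N) (Fin N) ℤ)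
    (n : ℕ) (x : Fin N → G) : (phi A)^[n] x = phi (A ^ n) x := by
  induction n with
  | zero => simp [phi_one]
  | succ n ih =>
      rw [Function.iterate_succ_apply', ih, ← phi_mul, ← pow_succ']

/-! ### Local logarithms -/

variable (K : Type*) [Field K] [NumberField K]

/-- The additive valuation of a unit, as an element of `Multiplicative ℤ`. -/
def ivalz (v : HeightOneSpectrum (𝓞 K)) (x : Kˣ) : Multiplicative ℤ :=
  WithZero.unzero ((v.valuation K).ne_zero_iff.mpr (Units.ne_zero x))

theorem coe_ivalz (v : HeightOneSpectrum (𝓞 K)) (x : Kˣ) :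
    ((ivalz K v x : Multiplicative ℤ) : WithZero (Multiplicative ℤ)) = v.valuation K (x : K) :=
  WithZero.coe_unzero _

/-- `ivalz` as a monoid hom. -/
def ivalHom (v : HeightOneSpectrum (𝓞 K)) : Kˣ →* Multiplicative ℤ where
  toFun := ivalz K v
  map_one' := by
    rw [← WithZero.coe_inj, coe_ivalz]
    simp
  map_mul' x y := by
    rw [← WithZero.coe_inj, WithZero.coe_mul, coe_ivalz, coe_ivalz, coe_ivalz,
      Units.val_mul, map_mul]

theorem finVal_units (v : HeightOneSpectrum (𝓞 K)) (x : Kˣ) :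
    finVal K v (x : K) = (Multiplicative.toAdd (ivalz K v x) : ℤ) *
      Real.log (Ideal.absNorm v.asIdeal) := by
  rw [finVal, dif_neg (Units.ne_zero x)]
  rfl

theorem finVal_prod_zpow {N : ℕ} (v : HeightOneSpectrum (𝓞 K)) (m : Fin N → ℤ)
    (x : Fin N → Kˣ) :
    finVal K v ((∏ j, x j ^ m j : Kˣ) : K) = ∑ j, (m j : ℝ) * finVal K v (x j : K) := by
  rw [finVal_units]
  have h1 : ivalz K v (∏ j, x j ^ m j) = ∏ j, (ivalz K v (x j)) ^ m j := by
    have := map_prod (ivalHom K v) (fun j => x j ^ m j) Finset.univ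
    simp only [ivalHom, MonoidHom.coe_mk, OneHom.coe_mk] at this
    rw [this]
    refine Finset.prod_congr rfl fun j _ => ?_
    exact map_zpow (ivalHom K v) (x j) (m j)
  rw [h1]
  have h2 : (Multiplicative.toAdd (∏ j, (ivalz K v (x j)) ^ m j) : ℤ)
      = ∑ j, m j * (Multiplicative.toAdd (ivalz K v (x j)) : ℤ) := by
    rw [toAdd_prod]
    exact Finset.sum_congr rfl fun j _ => by rw [toAdd_zpow, smul_eq_mul]
  rw [h2]
  push_cast
  rw [Finset.sum_mul]
  refine Finset.sum_congr rfl fun j _ => ?_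
  rw [finVal_units]
  ring

theorem finVal_eq_zero_of_valuation_eq_one (v : HeightOneSpectrum (𝓞 K)) (x : Kˣ)
    (h : v.valuation K (x : K) = 1) : finVal K v (x : K) = 0 := by
  rw [finVal_units]
  have : ivalz K v x = 1 := by
    rw [← WithZero.coe_inj, coe_ivalz, h]
    simp
  rw [this]
  simp

theorem log_infinitePlace_prod_zpow {N : ℕ} (w : InfinitePlace K) (m : Fin N → ℤ)
    (x : Fin N → Kˣ) :
    Real.log (w ((∏ j, x j ^ m j : Kˣ) : K)) = ∑ j, (m j : ℝ) * Real.log (w (x j : K)) := by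
  have h1 : ((∏ j, x j ^ m j : Kˣ) : K) = ∏ j, ((x j : K)) ^ m j := by
    rw [← Units.coeHom_apply, map_prod]
    exact Finset.prod_congr rfl fun j _ => Units.val_zpow_eq_zpow_val _ _
  rw [h1, map_prod, Real.log_prod]
  · refine Finset.sum_congr rfl fun j _ => ?_
    rw [map_zpow₀, Real.log_zpow]
  · intro j _
    exact (map_ne_zero w).mpr (zpow_ne_zero _ (Units.ne_zero _))

/-! ### Finiteness of the support at finite places -/

theorem finite_valuation_ne_one_int (r : 𝓞 K) (hr : r ≠ 0) :
    {v : HeightOneSpectrum (𝓞 K) | v.valuation K (algebraMap (𝓞 K) K r) ≠ 1}.Finite := by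
  have hI : Ideal.span {r} ≠ (0 : Ideal (𝓞 K)) := by
    simpa [Ideal.span_singleton_eq_bot] using hr
  refine Set.Finite.subset (Ideal.finite_factors hI) ?_
  intro v hv
  rw [Set.mem_setOf_eq] at hv ⊢
  rw [v.valuation_of_algebraMap] at hv
  rw [HeightOneSpectrum.intValuation_apply] at hv
  exact (v.intValuation_lt_one_iff_dvd r).mp (lt_of_le_of_ne (v.intValuation_le_one r) hv)

theorem finite_valuation_ne_one (x : K) (hx : x ≠ 0) :
    {v : HeightOneSpectrum (𝓞 K) | v.valuation K x ≠ 1}.Finite := by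
  obtain ⟨a, b, hb, rfl⟩ := IsFractionRing.div_surjective (A := 𝓞 K) x
  have hb0 : b ≠ 0 := nonZeroDivisors.ne_zero hb
  have ha0 : a ≠ 0 := by
    rintro rfl
    simp at hx
  refine Set.Finite.subset ((finite_valuation_ne_one_int K a ha0).union
    (finite_valuation_ne_one_int K b hb0)) ?_
  intro v hv
  rw [Set.mem_setOf_eq] at hv
  by_contra hcon
  rw [Set.mem_union, Set.mem_setOf_eq, Set.mem_setOf_eq] at hcon
  push_neg at hcon
  rw [map_div₀, hcon.1, hcon.2, div_one] at hv
  exact hv rfl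

/-! ### The local-sum function of a real matrix -/

variable {N : ℕ}

/-- `locSum M L = ⨆ i, max 0 ((M ⬝ L) i)`. -/
def locSum (M : Matrix (Fin N) (Fin N) ℝ) (L : Fin N → ℝ) : ℝ :=
  ⨆ i, max 0 (∑ j, M i j * L j)

variable [Nonempty (Fin N)]

theorem locSum_eq_sup' (M : Matrix (Fin N) (Fin N) ℝ) (L : Fin N → ℝ) :
    locSum M L = Finset.univ.sup' Finset.univ_nonempty
      (fun i => max 0 (∑ j, M i j * L j)) :=
  (Finset.sup'_univ_eq_ciSup _).symm

theorem locSum_eq_zero (M : Matrix (Fin N) (Fin N) ℝ) {L : Fin N → ℝ}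
    (h : ∀ j, L j = 0) : locSum M L = 0 := by
  simp [locSum, h]

theorem locSum_add_le (M₁ M₂ : Matrix (Fin N) (Fin N) ℝ) (L : Fin N → ℝ) :
    locSum (M₁ + M₂) L ≤ locSum M₁ L + locSum M₂ L := by
  rw [locSum_eq_sup', locSum_eq_sup', locSum_eq_sup']
  rw [Finset.sup'_le_iff]
  intro i _
  have h1 : (∑ j, (M₁ + M₂) i j * L j) = (∑ j, M₁ i j * L j) + ∑ j, M₂ i j * L j := by
    rw [← Finset.sum_add_distrib]
    refine Finset.sum_congr rfl fun j _ => ?_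
    simp [Matrix.add_apply]; ring
  rw [h1]
  calc max 0 ((∑ j, M₁ i j * L j) + ∑ j, M₂ i j * L j)
      ≤ max 0 (∑ j, M₁ i j * L j) + max 0 (∑ j, M₂ i j * L j) := by
        rcases le_total 0 ((∑ j, M₁ i j * L j) + ∑ j, M₂ i j * L j) with h | h
        · rw [max_eq_right h]
          exact add_le_add (le_max_right _ _) (le_max_right _ _)
        · rw [max_eq_left h]
          exact add_nonneg (le_max_left _ _) (le_max_left _ _)
    _ ≤ _ := add_le_add
        (Finset.le_sup' (fun i => max 0 (∑ j, M₁ i j * L j)) (Finset.mem_univ i))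
        (Finset.le_sup' (fun i => max 0 (∑ j, M₂ i j * L j)) (Finset.mem_univ i))

theorem locSum_smul {r : ℝ} (hr : 0 ≤ r) (M : Matrix (Fin N) (Fin N) ℝ) (L : Fin N → ℝ) :
    locSum (r • M) L = r * locSum M L := by
  rw [locSum_eq_sup', locSum_eq_sup']
  rw [Finset.comp_sup'_eq_sup'_comp (g := fun t => r * t) _ (fun x y => by
    exact mul_max_of_nonneg x y hr)]
  refine Finset.sup'_congr _ rfl fun i _ => ?_
  simp only [Function.comp_apply]
  rw [mul_max_of_nonneg _ _ hr, mul_zero, Finset.mul_sum]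
  congr 1
  refine Finset.sum_congr rfl fun j _ => ?_
  rw [Matrix.smul_apply, smul_eq_mul]
  ring

theorem locSum_one (L : Fin N → ℝ) : locSum 1 L = ⨆ i, max 0 (L i) := by
  unfold locSum
  congr 1
  funext i
  congr 1
  rw [Finset.sum_eq_single i (fun j _ hj => by
    rw [Matrix.one_apply_ne (Ne.symm hj), zero_mul]) (by simp)]
  rw [Matrix.one_apply_eq, one_mul]

theorem locSum_le {C : ℝ} (hC : 0 ≤ C) (M : Matrix (Fin N) (Fin N) ℝ) (L : Fin N → ℝ)
    (hM : ∀ i j, |M i j| ≤ C) : locSum M L ≤ C * ∑ j, |L j| := by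
  rw [locSum_eq_sup', Finset.sup'_le_iff]
  intro i _
  rw [max_le_iff]
  constructor
  · positivity
  calc (∑ j, M i j * L j) ≤ ∑ j, |M i j * L j| := Finset.sum_le_sum fun j _ => le_abs_self _
    _ ≤ ∑ j, C * |L j| := Finset.sum_le_sum fun j _ => by
        rw [abs_mul]
        exact mul_le_mul_of_nonneg_right (hM i j) (abs_nonneg _)
    _ = C * ∑ j, |L j| := by rw [Finset.mul_sum]

theorem tendsto_finset_sup' {ι α : Type*} {l : Filter α} (s : Finset ι) (hs : s.Nonempty)
    (f : α → ι → ℝ) (g : ι → ℝ) (h : ∀ i, Tendsto (fun x => f x i) l (𝓝 (g i))) :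
    Tendsto (fun x => s.sup' hs (f x)) l (𝓝 (s.sup' hs g)) := by
  induction hs using Finset.Nonempty.cons_induction with
  | singleton a => simpa using h a
  | cons a s ha hs ih =>
      simp only [Finset.sup'_cons hs]
      exact (h a).max ih

theorem locSum_tendsto {ι : Type*} {l : Filter ι} (Mf : ι → Matrix (Fin N) (Fin N) ℝ)
    (M₀ : Matrix (Fin N) (Fin N) ℝ) (L : Fin N → ℝ)
    (h : ∀ i j, Tendsto (fun t => Mf t i j) l (𝓝 (M₀ i j))) :
    Tendsto (fun t => locSum (Mf t) L) l (𝓝 (locSum M₀ L)) := by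
  rw [show (fun t => locSum (Mf t) L) = (fun t => Finset.univ.sup' Finset.univ_nonempty
      (fun i => max 0 (∑ j, Mf t i j * L j))) from funext fun t => locSum_eq_sup' _ _,
    locSum_eq_sup' M₀ L]
  exact tendsto_finset_sup' _ _ _ _ fun i =>
    tendsto_const_nhds.max (tendsto_finset_sum _ fun j _ => (h i j).mul tendsto_const_nhds)

/-! ### The `gfun` function -/

/-- An auxiliary "height along a real matrix" function. -/
def gfun (x : Fin N → Kˣ) (S : Finset (HeightOneSpectrum (𝓞 K)))
    (M : Matrix (Fin N) (Fin N) ℝ) : ℝ :=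
  (Module.finrank ℚ K : ℝ)⁻¹ *
    ((∑ w : InfinitePlace K, (w.mult : ℝ) * locSum M (fun j => Real.log (w (x j : K)))) +
     ∑ v ∈ S, locSum M (fun j => finVal K v (x j : K)))

theorem uHeight_phi (x : Fin N → Kˣ) (S : Finset (HeightOneSpectrum (𝓞 K)))
    (hS : ∀ v, v ∉ S → ∀ j, v.valuation K ((x j : K)) = 1)
    (M : Matrix (Fin N) (Fin N) ℤ) :
    uHeight K (phi M x) = gfun K x S (M.map (Int.cast : ℤ → ℝ)) := by
  have harch : ∀ w : InfinitePlace K,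
      (⨆ i, max 0 (Real.log (w ((phi M x i : Kˣ) : K))))
        = locSum (M.map (Int.cast : ℤ → ℝ)) (fun j => Real.log (w (x j : K))) := by
    intro w
    refine congrArg iSup (funext fun i => ?_)
    congr 1
    have h0 : ((phi M x i : Kˣ) : K) = ((∏ j, x j ^ M i j : Kˣ) : K) := rfl
    rw [h0, log_infinitePlace_prod_zpow]
    exact Finset.sum_congr rfl fun j _ => by rw [Matrix.map_apply]
  have hfin : ∀ v : HeightOneSpectrum (𝓞 K),
      (⨆ i, max 0 (finVal K v ((phi M x i : Kˣ) : K)))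
        = locSum (M.map (Int.cast : ℤ → ℝ)) (fun j => finVal K v (x j : K)) := by
    intro v
    refine congrArg iSup (funext fun i => ?_)
    congr 1
    have h0 : ((phi M x i : Kˣ) : K) = ((∏ j, x j ^ M i j : Kˣ) : K) := rfl
    rw [h0, finVal_prod_zpow]
    exact Finset.sum_congr rfl fun j _ => by rw [Matrix.map_apply]
  simp only [uHeight, logHeight, gfun]
  congr 1
  congr 1
  · exact Finset.sum_congr rfl fun w _ => by rw [harch w]
  · rw [finsum_congr hfin]
    refine finsum_eq_sum_of_support_subset _ ?_
    intro v hv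
    by_contra hmem
    apply hv
    refine locSum_eq_zero _ fun j => ?_
    exact finVal_eq_zero_of_valuation_eq_one K v (x j) (hS v hmem j)

theorem uHeight_eq_gfun_one (x : Fin N → Kˣ) (S : Finset (HeightOneSpectrum (𝓞 K)))
    (hS : ∀ v, v ∉ S → ∀ j, v.valuation K ((x j : K)) = 1) :
    uHeight K x = gfun K x S 1 := by
  have := uHeight_phi K x S hS 1
  rw [phi_one] at this
  rw [this]
  congr 1
  ext i j
  simp [Matrix.map_apply, Matrix.one_apply, apply_ite (Int.cast : ℤ → ℝ)]

theorem mult_nonneg' (w : InfinitePlace K) : (0 : ℝ) ≤ (w.mult : ℝ) := by positivity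

theorem gfun_add_le (x : Fin N → Kˣ) (S : Finset (HeightOneSpectrum (𝓞 K)))
    (M₁ M₂ : Matrix (Fin N) (Fin N) ℝ) :
    gfun K x S (M₁ + M₂) ≤ gfun K x S M₁ + gfun K x S M₂ := by
  unfold gfun
  rw [← mul_add]
  refine mul_le_mul_of_nonneg_left ?_ (by positivity)
  have h1 : (∑ w : InfinitePlace K, (w.mult : ℝ) *
        locSum (M₁ + M₂) (fun j => Real.log (w (x j : K))))
      ≤ (∑ w : InfinitePlace K, (w.mult : ℝ) * locSum M₁ (fun j => Real.log (w (x j : K)))) +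
        (∑ w : InfinitePlace K, (w.mult : ℝ) * locSum M₂ (fun j => Real.log (w (x j : K)))) := by
    rw [← Finset.sum_add_distrib]
    refine Finset.sum_le_sum fun w _ => ?_
    rw [← mul_add]
    exact mul_le_mul_of_nonneg_left (locSum_add_le _ _ _) (mult_nonneg' K w)
  have h2 : (∑ v ∈ S, locSum (M₁ + M₂) (fun j => finVal K v (x j : K)))
      ≤ (∑ v ∈ S, locSum M₁ (fun j => finVal K v (x j : K))) +
        (∑ v ∈ S, locSum M₂ (fun j => finVal K v (x j : K))) := by
    rw [← Finset.sum_add_distrib]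
    exact Finset.sum_le_sum fun v _ => locSum_add_le _ _ _
  linarith

theorem gfun_smul (x : Fin N → Kˣ) (S : Finset (HeightOneSpectrum (𝓞 K)))
    {r : ℝ} (hr : 0 ≤ r) (M : Matrix (Fin N) (Fin N) ℝ) :
    gfun K x S (r • M) = r * gfun K x S M := by
  unfold gfun
  simp only [locSum_smul hr]
  have h1 : (∑ w : InfinitePlace K, (w.mult : ℝ) *
      (r * locSum M (fun j => Real.log (w (x j : K)))))
      = r * ∑ w : InfinitePlace K, (w.mult : ℝ) * locSum M (fun j => Real.log (w (x j : K))) := by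
    rw [Finset.mul_sum]
    exact Finset.sum_congr rfl fun w _ => by ring
  have h2 : (∑ v ∈ S, r * locSum M (fun j => finVal K v (x j : K)))
      = r * ∑ v ∈ S, locSum M (fun j => finVal K v (x j : K)) := (Finset.mul_sum _ _ _).symm
  rw [h1, h2]
  ring

theorem gfun_le (x : Fin N → Kˣ) (S : Finset (HeightOneSpectrum (𝓞 K)))
    {C : ℝ} (hC : 0 ≤ C) (M : Matrix (Fin N) (Fin N) ℝ) (hM : ∀ i j, |M i j| ≤ C) :
    gfun K x S M ≤ (Module.finrank ℚ K : ℝ)⁻¹ *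
      ((∑ w : InfinitePlace K, (w.mult : ℝ) * (C * ∑ j, |Real.log (w (x j : K))|)) +
       ∑ v ∈ S, C * ∑ j, |finVal K v (x j : K)|) := by
  unfold gfun
  refine mul_le_mul_of_nonneg_left ?_ (by positivity)
  refine add_le_add (Finset.sum_le_sum fun w _ => ?_) (Finset.sum_le_sum fun v _ => ?_)
  · exact mul_le_mul_of_nonneg_left (locSum_le hC M _ hM) (mult_nonneg' K w)
  · exact locSum_le hC M _ hM

theorem gfun_tendsto {ι : Type*} {l : Filter ι} (x : Fin N → Kˣ)
    (S : Finset (HeightOneSpectrum (𝓞 K))) (Mf : ι → Matrix (Fin N) (Fin N) ℝ)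
    (M₀ : Matrix (Fin N) (Fin N) ℝ)
    (h : ∀ i j, Tendsto (fun t => Mf t i j) l (𝓝 (M₀ i j))) :
    Tendsto (fun t => gfun K x S (Mf t)) l (𝓝 (gfun K x S M₀)) := by
  unfold gfun
  refine Tendsto.const_mul _ (Tendsto.add ?_ ?_)
  · exact tendsto_finset_sum _ fun w _ =>
      Tendsto.const_mul _ (locSum_tendsto _ _ _ h)
  · exact tendsto_finset_sum _ fun v _ => locSum_tendsto _ _ _ h

/-! ### The limsup lemma -/

theorem le_limsup_subseq (f : ℕ → ℝ) (G : ℝ) (hf : ∀ n, f n ≤ G) (φ : ℕ → ℕ)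
    (hφ : StrictMono φ) (L : ℝ) (hL : Tendsto (fun m => f (φ m)) atTop (𝓝 L)) :
    L ≤ limsup f atTop := by
  have hbd : IsBoundedUnder (· ≤ ·) atTop f := ⟨G, Filter.eventually_map.mpr
    (Eventually.of_forall hf)⟩
  by_contra hcon
  push_neg at hcon
  set c := (limsup f atTop + L) / 2 with hc
  have h1 : limsup f atTop < c := by rw [hc]; linarith
  have h2 : c < L := by rw [hc]; linarith
  have h3 : ∀ᶠ n in atTop, f n < c := eventually_lt_of_limsup_lt h1 hbd
  have h4 : ∀ᶠ m in atTop, f (φ m) < c := hφ.tendsto_atTop.eventually h3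
  have h5 : ∀ᶠ m in atTop, c < f (φ m) := hL.eventually (eventually_gt_nhds h2)
  obtain ⟨m, hm1, hm2⟩ := (h4.and h5).exists
  linarith

/-! ### Subsequence with powers tending to one -/

theorem exists_pow_subseq {N : ℕ} (u : Fin N → ℂ) (hu : ∀ i, ‖u i‖ = 1) :
    ∃ φ : ℕ → ℕ, StrictMono φ ∧ ∀ i, Tendsto (fun m => u i ^ φ m) atTop (𝓝 1) := by
  have key : ∀ k : ℕ, ∃ n : ℕ, k ≤ n ∧ ∀ i, ‖u i ^ n - 1‖ < 1 / (k + 1) := by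
    intro k
    have hball : ∀ n : ℕ, (fun i => u i ^ n) ∈
        Set.univ.pi (fun _ : Fin N => Metric.closedBall (0 : ℂ) 1) := by
      intro n i _
      rw [Metric.mem_closedBall, Complex.dist_eq, sub_zero, norm_pow, hu, one_pow]
    obtain ⟨a, -, ψ, hψ, hconv⟩ := (isCompact_univ_pi
      (fun _ : Fin N => isCompact_closedBall (0 : ℂ) 1)).tendsto_subseq hball
    have hε : (0 : ℝ) < 1 / (k + 1) / 2 := by positivity
    obtain ⟨M, hM⟩ := Metric.tendsto_atTop.mp hconv (1 / (k + 1) / 2) hε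
    have hψadd : ∀ b, ψ M + b ≤ ψ (M + b) := by
      intro b
      induction b with
      | zero => simp
      | succ b ih =>
          have h : ψ (M + b) < ψ (M + b + 1) := hψ (by omega)
          show ψ M + (b + 1) ≤ ψ (M + b + 1)
          omega
    refine ⟨ψ (M + k) - ψ M, by have := hψadd k; omega, ?_⟩
    intro i
    have hd1 := hM (M + k) (by omega)
    have hd2 := hM M le_rfl
    have hdist : dist (u i ^ ψ (M + k)) (u i ^ ψ M) < 1 / (k + 1) := by
      calc dist (u i ^ ψ (M + k)) (u i ^ ψ M)
          ≤ dist ((fun i => u i ^ ψ (M + k)) : Fin N → ℂ) (fun i => u i ^ ψ M) :=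
            dist_le_pi_dist (fun i => u i ^ ψ (M + k)) (fun i => u i ^ ψ M) i
        _ ≤ dist ((fun i => u i ^ ψ (M + k)) : Fin N → ℂ) a
            + dist ((fun i => u i ^ ψ M) : Fin N → ℂ) a := dist_triangle_right _ _ _
        _ < 1 / (k + 1) / 2 + 1 / (k + 1) / 2 := add_lt_add hd1 hd2
        _ = 1 / (k + 1) := by ring
    have habs1 : ‖u i ^ ψ M‖ = 1 := by rw [norm_pow, hu, one_pow]
    have hpow : u i ^ ψ M * (u i ^ (ψ (M + k) - ψ M) - 1) = u i ^ ψ (M + k) - u i ^ ψ M := by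
      rw [mul_sub, mul_one, ← pow_add]
      congr 2
      have := hψadd k
      omega
    calc ‖u i ^ (ψ (M + k) - ψ M) - 1‖
        = ‖u i ^ ψ M‖ * ‖u i ^ (ψ (M + k) - ψ M) - 1‖ := by
          rw [habs1, one_mul]
      _ = ‖u i ^ ψ (M + k) - u i ^ ψ M‖ := by rw [← norm_mul, hpow]
      _ < 1 / (k + 1) := by rw [← Complex.dist_eq]; exact hdist
  choose f hf1 hf2 using key
  set φ : ℕ → ℕ := fun k => Nat.rec (motive := fun _ => ℕ) (f 0)
    (fun k ih => f (ih + 1 + k)) k with hφdef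
  have hφsucc : ∀ k, φ (k + 1) = f (φ k + 1 + k) := fun k => rfl
  have hφmono : StrictMono φ := by
    apply strictMono_nat_of_lt_succ
    intro k
    rw [hφsucc]
    have := hf1 (φ k + 1 + k)
    omega
  have hφbound : ∀ k, ∀ i, ‖u i ^ φ k - 1‖ < 1 / (k + 1) := by
    intro k i
    cases k with
    | zero => exact hf2 0 i
    | succ k =>
        rw [hφsucc]
        have hle : (k : ℝ) ≤ (φ k : ℝ) := by exact_mod_cast hφmono.le_apply
        refine lt_of_lt_of_le (hf2 (φ k + 1 + k) i) ?_
        refine one_div_le_one_div_of_le (by positivity) ?_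
        push_cast
        linarith
  refine ⟨φ, hφmono, fun i => ?_⟩
  rw [tendsto_iff_dist_tendsto_zero]
  have hb : ∀ k : ℕ, dist (u i ^ φ k) 1 ≤ 1 / ((k : ℝ) + 1) := fun k => by
    rw [Complex.dist_eq]
    exact (hφbound k i).le
  exact squeeze_zero (fun k => dist_nonneg) hb tendsto_one_div_add_atTop_nhds_zero_nat

end Statement13Aux

open Statement13Aux
open scoped Topology

/-- If A is diagonalizable with eigenvalues of exactly two moduli rl > rm > 0, and
A' = |det A|·A⁻¹ = sgn(det A)·adjugate(A), then the total canonical height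
ĥ_A(P) = ĥ_A⁺(P) + ĥ_{A'}⁺(P) satisfies ĥ_A(P) ≥ h(P), where
δ_A = rl and δ_{A'} = rl^{i₀}·rm^{N-i₀-1} with i₀ the number of eigenvalues of modulus rl. -/
theorem statement13 {N : ℕ} (A : Matrix (Fin N) (Fin N) ℤ) (hA : A.det ≠ 0)
    (B : Matrix (Fin N) (Fin N) ℂ) (hB : IsUnit B.det) (lam : Fin N → ℂ)
    (hdiag : A.map (Int.cast : ℤ → ℂ) = B * Matrix.diagonal lam * B⁻¹)
    (rl rm : ℝ) (hlt : rm < rl) (hm0 : 0 < rm)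
    (hmod : ∀ i, ‖lam i‖ = rl ∨ ‖lam i‖ = rm)
    (hex1 : ∃ i, ‖lam i‖ = rl) (hex2 : ∃ i, ‖lam i‖ = rm)
    (K : Type*) [Field K] [NumberField K] (P : Fin N → Kˣ) :
    uHeight K P ≤
      Filter.limsup (fun n : ℕ => uHeight K ((phi A)^[n] P) / rl ^ n) Filter.atTop +
      Filter.limsup
        (fun n : ℕ =>
          uHeight K ((phi (A.det.sign • A.adjugate))^[n] P) /
            (rl ^ ((Finset.univ.filter fun i => ‖lam i‖ = rl).card) *
              rm ^ (N - (Finset.univ.filter fun i => ‖lam i‖ = rl).card - 1)) ^ n)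
        Filter.atTop := by
  classical
  obtain ⟨iℓ, hiℓ⟩ := hex1
  haveI : Nonempty (Fin N) := ⟨iℓ⟩
  have hrl0 : (0:ℝ) < rl := lt_trans hm0 hlt
  have hlam0 : ∀ k, lam k ≠ 0 := fun k hc => by
    rcases hmod k with h | h <;> rw [hc, norm_zero] at h <;> linarith
  set i₀ := (Finset.univ.filter fun i => ‖lam i‖ = rl).card with hi₀def
  set δ' : ℝ := rl ^ i₀ * rm ^ (N - i₀ - 1) with hδ'def
  have hδ'0 : 0 < δ' := by positivity
  set A' : Matrix (Fin N) (Fin N) ℤ := A.det.sign • A.adjugate with hA'def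
  -- cast bridges
  have hmapR : ∀ (Z : Matrix (Fin N) (Fin N) ℤ) (n : ℕ),
      (Z ^ n).map (Int.cast : ℤ → ℝ) = (Z.map (Int.cast : ℤ → ℝ)) ^ n := by
    intro Z n
    have h := map_pow ((Int.castRingHom ℝ).mapMatrix) Z n
    simpa [RingHom.mapMatrix_apply] using h
  have hmapC : ∀ (Z : Matrix (Fin N) (Fin N) ℤ) (n : ℕ),
      (Z ^ n).map (Int.cast : ℤ → ℂ) = (Z.map (Int.cast : ℤ → ℂ)) ^ n := by
    intro Z n
    have h := map_pow ((Int.castRingHom ℂ).mapMatrix) Z n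
    simpa [RingHom.mapMatrix_apply] using h
  have hbridge : ∀ (Z : Matrix (Fin N) (Fin N) ℤ) (n : ℕ) (i j : Fin N),
      ((((Z.map (Int.cast : ℤ → ℝ)) ^ n) i j : ℝ) : ℂ) = ((Z.map (Int.cast : ℤ → ℂ)) ^ n) i j := by
    intro Z n i j
    rw [← hmapR, ← hmapC, Matrix.map_apply, Matrix.map_apply]
    push_cast
    rfl
  -- diagonalization facts
  have hBB : B * B⁻¹ = 1 := Matrix.mul_nonsing_inv B hB
  have hBB' : B⁻¹ * B = 1 := Matrix.nonsing_inv_mul B hB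
  have conj_pow : ∀ (d : Fin N → ℂ) (n : ℕ),
      (B * Matrix.diagonal d * B⁻¹) ^ n = B * Matrix.diagonal (fun k => d k ^ n) * B⁻¹ := by
    intro d n
    induction n with
    | zero =>
        have h1 : (fun k => d k ^ 0) = fun _ : Fin N => (1:ℂ) := by funext k; simp
        rw [pow_zero, h1, Matrix.diagonal_one, Matrix.mul_one, hBB]
    | succ n ih =>
        have hstep : (fun k => d k ^ (n+1)) = fun k => d k ^ n * d k :=
          funext fun k => pow_succ _ _
        have hcanc : ∀ X : Matrix (Fin N) (Fin N) ℂ, B⁻¹ * (B * X) = X := fun X => by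
          rw [← Matrix.mul_assoc, hBB', Matrix.one_mul]
        rw [pow_succ, ih, hstep, ← Matrix.diagonal_mul_diagonal]
        simp only [Matrix.mul_assoc]
        rw [hcanc]
  have hentry : ∀ (d : Fin N → ℂ) (i j : Fin N),
      (B * Matrix.diagonal d * B⁻¹) i j = ∑ k, B i k * d k * B⁻¹ k j := by
    intro d i j
    rw [Matrix.mul_apply]
    exact Finset.sum_congr rfl fun k _ => by rw [Matrix.mul_diagonal]
  -- determinant
  have hdetCast : (A.map (Int.cast : ℤ → ℂ)).det = (A.det : ℂ) := by
    have h := RingHom.map_det (Int.castRingHom ℂ) A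
    simpa [RingHom.mapMatrix_apply] using h.symm
  have hBne : B.det ≠ 0 := hB.ne_zero
  have hdetC : (A.det : ℂ) = ∏ k, lam k := by
    rw [← hdetCast, hdiag, Matrix.det_mul, Matrix.det_mul, Matrix.det_diagonal,
      Matrix.det_nonsing_inv, Ring.inverse_eq_inv', mul_right_comm,
      mul_inv_cancel₀ hBne, one_mul]
  have habsdet : ((|A.det| : ℤ) : ℝ) = rl ^ i₀ * rm ^ (N - i₀) := by
    have h1 : ((|A.det| : ℤ) : ℝ) = ‖((A.det : ℂ))‖ := by
      rw [Complex.norm_intCast, Int.cast_abs]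
    rw [h1, hdetC, norm_prod]
    rw [← Finset.prod_filter_mul_prod_filter_not Finset.univ
      (fun i => ‖lam i‖ = rl)]
    have hcards := Finset.card_filter_add_card_filter_not
      (s := (Finset.univ : Finset (Fin N))) (p := fun i => ‖lam i‖ = rl)
    congr 1
    · rw [Finset.prod_congr rfl (fun i hi => (Finset.mem_filter.mp hi).2), Finset.prod_const]
    · rw [Finset.prod_congr rfl (fun i hi => ?_), Finset.prod_const]
      · congr 1
        simp only [Finset.card_univ, Fintype.card_fin] at hcards
        omega
      · rcases hmod i with h | h
        · exact absurd h (Finset.mem_filter.mp hi).2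
        · exact h
  obtain ⟨im, him⟩ := hex2
  have hi₀lt : i₀ < N := by
    have hnm : im ∉ Finset.univ.filter fun i => ‖lam i‖ = rl := by
      simp only [Finset.mem_filter, Finset.mem_univ, true_and, him]
      linarith
    have hss : (Finset.univ.filter fun i => ‖lam i‖ = rl) ⊂ Finset.univ :=
      Finset.ssubset_univ_iff.mpr (fun he => hnm (by rw [he]; exact Finset.mem_univ im))
    have := Finset.card_lt_card hss
    simpa [Finset.card_univ] using this
  have hdetδ : ((|A.det| : ℤ) : ℝ) = δ' * rm := by
    rw [habsdet, hδ'def]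
    have h1 : rm ^ (N - i₀) = rm ^ (N - i₀ - 1) * rm := by
      rw [← pow_succ]
      congr 1
      omega
    rw [h1]
    ring
  -- A' over ℂ
  have hA'C : A'.map (Int.cast : ℤ → ℂ)
      = B * Matrix.diagonal (fun k => ((|A.det| : ℤ) : ℂ) * (lam k)⁻¹) * B⁻¹ := by
    have h1 : A'.map (Int.cast : ℤ → ℂ)
        = ((A.det.sign : ℤ) : ℂ) • (A.adjugate.map (Int.cast : ℤ → ℂ)) := by
      ext i j
      simp only [hA'def, Matrix.map_apply, Matrix.smul_apply, smul_eq_mul]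
      push_cast
      ring
    have h2 : A.adjugate.map (Int.cast : ℤ → ℂ) = (A.map (Int.cast : ℤ → ℂ)).adjugate := by
      have h := RingHom.map_adjugate (Int.castRingHom ℂ) A
      simpa [RingHom.mapMatrix_apply] using h
    have hdet0 : (A.map (Int.cast : ℤ → ℂ)).det ≠ 0 := by
      rw [hdetCast]
      exact_mod_cast hA
    have hunit : IsUnit (A.map (Int.cast : ℤ → ℂ)).det := isUnit_iff_ne_zero.mpr hdet0
    have hadj : (A.map (Int.cast : ℤ → ℂ)).adjugate
        = (A.det : ℂ) • (A.map (Int.cast : ℤ → ℂ))⁻¹ := by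
      have hm := Matrix.mul_adjugate (A.map (Int.cast : ℤ → ℂ))
      have hc : (A.map (Int.cast : ℤ → ℂ))⁻¹ *
          ((A.map (Int.cast : ℤ → ℂ)) * (A.map (Int.cast : ℤ → ℂ)).adjugate)
          = (A.map (Int.cast : ℤ → ℂ)).adjugate := by
        rw [← Matrix.mul_assoc, Matrix.nonsing_inv_mul _ hunit, Matrix.one_mul]
      rw [hm, Matrix.mul_smul, Matrix.mul_one, hdetCast] at hc
      exact hc.symm
    have hDinv : (Matrix.diagonal lam)⁻¹ = Matrix.diagonal (fun k => (lam k)⁻¹) := by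
      apply Matrix.inv_eq_right_inv
      rw [Matrix.diagonal_mul_diagonal]
      have hone : ∀ k : Fin N, lam k * (lam k)⁻¹ = 1 := fun k => mul_inv_cancel₀ (hlam0 k)
      simp only [hone]
      exact Matrix.diagonal_one
    have hinv : (A.map (Int.cast : ℤ → ℂ))⁻¹
        = B * Matrix.diagonal (fun k => (lam k)⁻¹) * B⁻¹ := by
      rw [hdiag, Matrix.mul_inv_rev, Matrix.mul_inv_rev,
        Matrix.nonsing_inv_nonsing_inv B hB, hDinv, ← Matrix.mul_assoc]
    have hsgn : A.det.sign * A.det = |A.det| := by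
      rcases lt_trichotomy A.det 0 with h | h | h
      · rw [Int.sign_eq_neg_one_of_neg h, abs_of_neg h]; ring
      · exact absurd h hA
      · rw [Int.sign_eq_one_of_pos h, abs_of_pos h]; ring
    calc A'.map (Int.cast : ℤ → ℂ)
        = ((A.det.sign : ℤ) : ℂ) • ((A.det : ℂ) • (A.map (Int.cast : ℤ → ℂ))⁻¹) := by
          rw [h1, h2, hadj]
      _ = ((|A.det| : ℤ) : ℂ) • (A.map (Int.cast : ℤ → ℂ))⁻¹ := by
          rw [smul_smul, ← Int.cast_mul, hsgn]
      _ = B * Matrix.diagonal (fun k => ((|A.det| : ℤ) : ℂ) * (lam k)⁻¹) * B⁻¹ := by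
          rw [hinv]
          have hsm : Matrix.diagonal (fun k => ((|A.det| : ℤ) : ℂ) * (lam k)⁻¹)
              = ((|A.det| : ℤ) : ℂ) • Matrix.diagonal (fun k => (lam k)⁻¹) := by
            rw [← Matrix.diagonal_smul]
            rfl
          rw [hsm, Matrix.mul_smul, Matrix.smul_mul]
  -- the rotation subsequence
  have habs_u : ∀ k, ‖(lam k / ((‖lam k‖ : ℝ) : ℂ))‖ = 1 := by
    intro k
    have h0 : ‖lam k‖ ≠ 0 := norm_ne_zero_iff.mpr (hlam0 k)
    rw [norm_div, Complex.norm_real, Real.norm_eq_abs, abs_of_nonneg (norm_nonneg _), div_self h0]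
  obtain ⟨φ, hφmono, hφlim⟩ := exists_pow_subseq
    (fun k => lam k / ((‖lam k‖ : ℝ) : ℂ)) habs_u
  have hq1 : ∀ k, Tendsto (fun m => (lam k / ((rl : ℝ) : ℂ)) ^ φ m) atTop
      (𝓝 (if ‖lam k‖ = rl then 1 else 0)) := by
    intro k
    rcases hmod k with h | h
    · rw [if_pos h]
      have : lam k / ((rl : ℝ) : ℂ) = lam k / ((‖lam k‖ : ℝ) : ℂ) := by rw [h]
      rw [this]
      exact hφlim k
    · rw [if_neg (by rw [h]; exact ne_of_lt hlt)]
      have hnorm : ∀ m : ℕ, ‖(lam k / ((rl : ℝ) : ℂ)) ^ φ m‖ ≤ (rm / rl) ^ m := by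
        intro m
        rw [norm_pow, norm_div, h, Complex.norm_real, Real.norm_eq_abs,
          abs_of_pos hrl0]
        exact pow_le_pow_of_le_one (by positivity) ((div_le_one hrl0).mpr hlt.le)
          (hφmono.le_apply)
      exact squeeze_zero_norm hnorm
        (tendsto_pow_atTop_nhds_zero_of_lt_one (by positivity) ((div_lt_one hrl0).mpr hlt))
  have hq2 : ∀ k, Tendsto (fun m => (((rm : ℝ) : ℂ) / lam k) ^ φ m) atTop
      (𝓝 (1 - if ‖lam k‖ = rl then 1 else 0)) := by
    intro k
    rcases hmod k with h | h
    · rw [if_pos h, sub_self]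
      have hnorm : ∀ m : ℕ, ‖(((rm : ℝ) : ℂ) / lam k) ^ φ m‖ ≤ (rm / rl) ^ m := by
        intro m
        rw [norm_pow, norm_div, h, Complex.norm_real, Real.norm_eq_abs,
          abs_of_pos hm0]
        exact pow_le_pow_of_le_one (by positivity) ((div_le_one hrl0).mpr hlt.le)
          (hφmono.le_apply)
      exact squeeze_zero_norm hnorm
        (tendsto_pow_atTop_nhds_zero_of_lt_one (by positivity) ((div_lt_one hrl0).mpr hlt))
    · rw [if_neg (by rw [h]; exact ne_of_lt hlt), sub_zero]
      have hinv : ((rm : ℝ) : ℂ) / lam k = (lam k / ((‖lam k‖ : ℝ) : ℂ))⁻¹ := by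
        rw [inv_div, h]
      rw [hinv]
      have hip : (fun m => ((lam k / ((‖lam k‖ : ℝ) : ℂ))⁻¹) ^ φ m)
          = fun m => ((lam k / ((‖lam k‖ : ℝ) : ℂ)) ^ φ m)⁻¹ :=
        funext fun m => inv_pow _ _
      rw [hip]
      simpa using (hφlim k).inv₀ one_ne_zero
  -- limit matrices
  set αR : Matrix (Fin N) (Fin N) ℝ := Matrix.of fun i j =>
    (∑ k, B i k * (if ‖lam k‖ = rl then 1 else 0) * B⁻¹ k j).re with hαRdef
  set βR : Matrix (Fin N) (Fin N) ℝ := Matrix.of fun i j =>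
    (∑ k, B i k * (1 - if ‖lam k‖ = rl then 1 else 0) * B⁻¹ k j).re with hβRdef
  have hαβ : αR + βR = 1 := by
    ext i j
    simp only [hαRdef, hβRdef, Matrix.add_apply, Matrix.of_apply]
    rw [← Complex.add_re, ← Finset.sum_add_distrib]
    have hs : (∑ k, (B i k * (if ‖lam k‖ = rl then 1 else 0) * B⁻¹ k j
        + B i k * (1 - if ‖lam k‖ = rl then 1 else 0) * B⁻¹ k j))
        = ∑ k, B i k * B⁻¹ k j := Finset.sum_congr rfl fun k _ => by ring
    rw [hs, ← Matrix.mul_apply, hBB]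
    by_cases hij : i = j <;> simp [Matrix.one_apply, hij]
  -- finite place support
  have hSfin : {v : HeightOneSpectrum (𝓞 K) | ∃ j, v.valuation K ((P j : K)) ≠ 1}.Finite := by
    have hU : {v : HeightOneSpectrum (𝓞 K) | ∃ j, v.valuation K ((P j : K)) ≠ 1}
        = ⋃ j, {v : HeightOneSpectrum (𝓞 K) | v.valuation K ((P j : K)) ≠ 1} := by
      ext v
      simp [Set.mem_iUnion]
    rw [hU]
    exact Set.finite_iUnion fun j => finite_valuation_ne_one K _ (Units.ne_zero _)
  set S : Finset (HeightOneSpectrum (𝓞 K)) := hSfin.toFinset with hSdef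
  have hS : ∀ v, v ∉ S → ∀ j, v.valuation K ((P j : K)) = 1 := by
    intro v hv j
    by_contra hc
    exact hv (hSfin.mem_toFinset.mpr ⟨j, hc⟩)
  -- sequences as gfun values
  have ha : ∀ n : ℕ, uHeight K ((phi A)^[n] P) / rl ^ n
      = gfun K P S ((rl ^ n)⁻¹ • ((A.map (Int.cast : ℤ → ℝ)) ^ n)) := by
    intro n
    rw [phi_pow, uHeight_phi K P S hS (A ^ n), hmapR A n,
      gfun_smul K P S (r := (rl ^ n)⁻¹) (by positivity), div_eq_inv_mul]
  have hb : ∀ n : ℕ, uHeight K ((phi A')^[n] P) / δ' ^ n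
      = gfun K P S ((δ' ^ n)⁻¹ • ((A'.map (Int.cast : ℤ → ℝ)) ^ n)) := by
    intro n
    rw [phi_pow, uHeight_phi K P S hS (A' ^ n), hmapR A' n,
      gfun_smul K P S (r := (δ' ^ n)⁻¹) (by positivity), div_eq_inv_mul]
  -- complex-entry formulas
  have hcastA : ∀ (n : ℕ) (i j : Fin N),
      ((((rl ^ n)⁻¹ • ((A.map (Int.cast : ℤ → ℝ)) ^ n)) i j : ℝ) : ℂ)
        = ∑ k, B i k * (lam k / ((rl : ℝ) : ℂ)) ^ n * B⁻¹ k j := by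
    intro n i j
    rw [Matrix.smul_apply, smul_eq_mul, Complex.ofReal_mul, Complex.ofReal_inv,
      hbridge A n i j, hdiag, conj_pow, hentry, Finset.mul_sum]
    refine Finset.sum_congr rfl fun k _ => ?_
    have hpow : ((rl ^ n : ℝ) : ℂ) = ((rl : ℝ) : ℂ) ^ n := by push_cast; rfl
    rw [div_pow, hpow, div_eq_mul_inv]
    ring
  have hcastA' : ∀ (n : ℕ) (i j : Fin N),
      ((((δ' ^ n)⁻¹ • ((A'.map (Int.cast : ℤ → ℝ)) ^ n)) i j : ℝ) : ℂ)
        = ∑ k, B i k * (((rm : ℝ) : ℂ) / lam k) ^ n * B⁻¹ k j := by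
    intro n i j
    rw [Matrix.smul_apply, smul_eq_mul, Complex.ofReal_mul, Complex.ofReal_inv,
      hbridge A' n i j, hA'C, conj_pow, hentry, Finset.mul_sum]
    refine Finset.sum_congr rfl fun k _ => ?_
    have hdc : ((|A.det| : ℤ) : ℂ) * (lam k)⁻¹ = ((δ' : ℝ) : ℂ) * (((rm : ℝ) : ℂ) / lam k) := by
      have h1 : ((|A.det| : ℤ) : ℂ) = (((δ' * rm : ℝ)) : ℂ) := by
        rw [← hdetδ, Complex.ofReal_intCast]
      rw [h1, Complex.ofReal_mul]
      ring
    have hpow : ((δ' ^ n : ℝ) : ℂ) = ((δ' : ℝ) : ℂ) ^ n := by push_cast; rfl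
    have h0 : ((δ' : ℝ) : ℂ) ^ n ≠ 0 := pow_ne_zero _ (by exact_mod_cast hδ'0.ne')
    rw [hdc]
    calc (((δ' ^ n : ℝ) : ℂ))⁻¹ *
          (B i k * ((((δ' : ℝ) : ℂ)) * (((rm : ℝ) : ℂ) / lam k)) ^ n * B⁻¹ k j)
        = (((δ' : ℝ) : ℂ) ^ n)⁻¹ *
            (B i k * (((δ' : ℝ) : ℂ) ^ n * (((rm : ℝ) : ℂ) / lam k) ^ n) * B⁻¹ k j) := by
          rw [hpow, mul_pow]
      _ = ((((δ' : ℝ) : ℂ) ^ n)⁻¹ * ((δ' : ℝ) : ℂ) ^ n) *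
            (B i k * (((rm : ℝ) : ℂ) / lam k) ^ n * B⁻¹ k j) := by ring
      _ = B i k * (((rm : ℝ) : ℂ) / lam k) ^ n * B⁻¹ k j := by
          rw [inv_mul_cancel₀ h0, one_mul]
  -- entrywise limits along the subsequence
  have hMlimA : ∀ i j, Tendsto
      (fun m => ((rl ^ φ m)⁻¹ • ((A.map (Int.cast : ℤ → ℝ)) ^ φ m)) i j) atTop (𝓝 (αR i j)) := by
    intro i j
    have hC : Tendsto (fun m => ∑ k, B i k * (lam k / ((rl : ℝ) : ℂ)) ^ φ m * B⁻¹ k j) atTop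
        (𝓝 (∑ k, B i k * (if ‖lam k‖ = rl then 1 else 0) * B⁻¹ k j)) :=
      tendsto_finset_sum _ fun k _ => (tendsto_const_nhds.mul (hq1 k)).mul tendsto_const_nhds
    have hre : Tendsto (fun m => (∑ k, B i k * (lam k / ((rl : ℝ) : ℂ)) ^ φ m * B⁻¹ k j).re)
        atTop (𝓝 ((∑ k, B i k * (if ‖lam k‖ = rl then 1 else 0) * B⁻¹ k j).re)) :=
      (Complex.continuous_re.tendsto _).comp hC
    have hval : αR i j = (∑ k, B i k * (if ‖lam k‖ = rl then 1 else 0)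
        * B⁻¹ k j).re := rfl
    rw [hval]
    refine Tendsto.congr (fun m => ?_) hre
    rw [← hcastA (φ m) i j, Complex.ofReal_re]
  have hMlimA' : ∀ i j, Tendsto
      (fun m => ((δ' ^ φ m)⁻¹ • ((A'.map (Int.cast : ℤ → ℝ)) ^ φ m)) i j) atTop (𝓝 (βR i j)) := by
    intro i j
    have hC : Tendsto (fun m => ∑ k, B i k * (((rm : ℝ) : ℂ) / lam k) ^ φ m * B⁻¹ k j) atTop
        (𝓝 (∑ k, B i k * (1 - if ‖lam k‖ = rl then 1 else 0) * B⁻¹ k j)) :=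
      tendsto_finset_sum _ fun k _ => (tendsto_const_nhds.mul (hq2 k)).mul tendsto_const_nhds
    have hre : Tendsto (fun m => (∑ k, B i k * (((rm : ℝ) : ℂ) / lam k) ^ φ m * B⁻¹ k j).re)
        atTop (𝓝 ((∑ k, B i k * (1 - if ‖lam k‖ = rl then 1 else 0)
          * B⁻¹ k j).re)) :=
      (Complex.continuous_re.tendsto _).comp hC
    have hval : βR i j = (∑ k, B i k * (1 - if ‖lam k‖ = rl then 1 else 0)
        * B⁻¹ k j).re := rfl
    rw [hval]
    refine Tendsto.congr (fun m => ?_) hre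
    rw [← hcastA' (φ m) i j, Complex.ofReal_re]
  -- uniform bound
  set CB : ℝ := ∑ p : Fin N × Fin N, ∑ k, ‖B p.1 k‖ * ‖B⁻¹ k p.2‖
    with hCBdef
  have hCB0 : 0 ≤ CB := Finset.sum_nonneg fun p _ => Finset.sum_nonneg fun k _ =>
    mul_nonneg (norm_nonneg _) (norm_nonneg _)
  have hboundentry : ∀ (q : Fin N → ℂ), (∀ k, ‖q k‖ ≤ 1) → ∀ (i j : Fin N),
      ‖∑ k, B i k * q k * B⁻¹ k j‖ ≤ CB := by
    intro q hq i j
    calc ‖∑ k, B i k * q k * B⁻¹ k j‖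
        ≤ ∑ k, ‖B i k * q k * B⁻¹ k j‖ := norm_sum_le _ _
      _ ≤ ∑ k, ‖B i k‖ * ‖B⁻¹ k j‖ := by
          refine Finset.sum_le_sum fun k _ => ?_
          rw [norm_mul, norm_mul]
          calc ‖B i k‖ * ‖q k‖ * ‖B⁻¹ k j‖
              ≤ ‖B i k‖ * 1 * ‖B⁻¹ k j‖ :=
                mul_le_mul_of_nonneg_right
                  (mul_le_mul_of_nonneg_left (hq k) (norm_nonneg _))
                  (norm_nonneg _)
            _ = ‖B i k‖ * ‖B⁻¹ k j‖ := by ring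
      _ ≤ CB := by
          have hkey := Finset.single_le_sum
            (f := fun p : Fin N × Fin N => ∑ k, ‖B p.1 k‖ * ‖B⁻¹ k p.2‖)
            (fun p _ => Finset.sum_nonneg fun k _ =>
              mul_nonneg (norm_nonneg _) (norm_nonneg _))
            (Finset.mem_univ (i, j))
          simpa [hCBdef] using hkey
  set G : ℝ := (Module.finrank ℚ K : ℝ)⁻¹ *
      ((∑ w : InfinitePlace K, (w.mult : ℝ) * (CB * ∑ j, |Real.log (w (P j : K))|)) +
       ∑ v ∈ S, CB * ∑ j, |finVal K v (P j : K)|) with hGdef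
  have hbnd1 : ∀ n : ℕ, uHeight K ((phi A)^[n] P) / rl ^ n ≤ G := by
    intro n
    rw [ha n, hGdef]
    refine gfun_le K P S hCB0 _ ?_
    intro i j
    have h1 : |(((rl ^ n)⁻¹ • ((A.map (Int.cast : ℤ → ℝ)) ^ n)) i j)|
        ≤ ‖((( ((rl ^ n)⁻¹ • ((A.map (Int.cast : ℤ → ℝ)) ^ n)) i j : ℝ)) : ℂ)‖ := by
      rw [Complex.norm_real, Real.norm_eq_abs]
    rw [hcastA n i j] at h1
    refine le_trans h1 (hboundentry _ (fun k => ?_) i j)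
    rw [norm_pow, norm_div, Complex.norm_real, Real.norm_eq_abs, abs_of_pos hrl0]
    refine pow_le_one₀ (by positivity) ?_
    rcases hmod k with h | h <;> rw [h]
    · exact le_of_eq (div_self hrl0.ne')
    · exact (div_le_one hrl0).mpr hlt.le
  have hbnd2 : ∀ n : ℕ, uHeight K ((phi A')^[n] P) / δ' ^ n ≤ G := by
    intro n
    rw [hb n, hGdef]
    refine gfun_le K P S hCB0 _ ?_
    intro i j
    have h1 : |(((δ' ^ n)⁻¹ • ((A'.map (Int.cast : ℤ → ℝ)) ^ n)) i j)|
        ≤ ‖((( ((δ' ^ n)⁻¹ • ((A'.map (Int.cast : ℤ → ℝ)) ^ n)) i j : ℝ)) : ℂ)‖ := by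
      rw [Complex.norm_real, Real.norm_eq_abs]
    rw [hcastA' n i j] at h1
    refine le_trans h1 (hboundentry _ (fun k => ?_) i j)
    rw [norm_pow, norm_div, Complex.norm_real, Real.norm_eq_abs, abs_of_pos hm0]
    refine pow_le_one₀ (by positivity) ?_
    rcases hmod k with h | h <;> rw [h]
    · exact (div_le_one hrl0).mpr hlt.le
    · exact le_of_eq (div_self hm0.ne')
  -- the two limsup bounds
  have hlimsup1 : gfun K P S αR ≤
      limsup (fun n : ℕ => uHeight K ((phi A)^[n] P) / rl ^ n) atTop := by
    refine le_limsup_subseq _ G hbnd1 φ hφmono _ ?_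
    have ht := gfun_tendsto K P S
      (fun m => (rl ^ φ m)⁻¹ • ((A.map (Int.cast : ℤ → ℝ)) ^ φ m)) αR hMlimA
    refine Tendsto.congr (fun m => ?_) ht
    exact (ha (φ m)).symm
  have hlimsup2 : gfun K P S βR ≤
      limsup (fun n : ℕ => uHeight K ((phi A')^[n] P) / δ' ^ n) atTop := by
    refine le_limsup_subseq _ G hbnd2 φ hφmono _ ?_
    have ht := gfun_tendsto K P S
      (fun m => (δ' ^ φ m)⁻¹ • ((A'.map (Int.cast : ℤ → ℝ)) ^ φ m)) βR hMlimA'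
    refine Tendsto.congr (fun m => ?_) ht
    exact (hb (φ m)).symm
  -- conclusion
  calc uHeight K P = gfun K P S (αR + βR) := by
        rw [hαβ]
        exact uHeight_eq_gfun_one K P S hS
    _ ≤ gfun K P S αR + gfun K P S βR := gfun_add_le K P S _ _
    _ ≤ _ := add_le_add hlimsup1 hlimsup2
end
end
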